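/- arXiv:2308.10553 — 3 statements merged into one kernel-verified Lean document; each statement's English description precedes it below -/
import Mathlib

section
/- Let f : ℂ → ℂ be holomorphic (complex differentiable) on the punctured unit disc {z ∈ ℂ : 0 < |z| < 1}, and suppose that the function z ↦ |f(z)|² is Lebesgue integrable on the punctured unit disc (with respect to two-dimensional Lebesgue measure on ℂ). Then f extends holomorphically across the origin: there exists a function g holomorphic on the full unit disc {z ∈ ℂ : |z| < 1} such that g(z) = f(z) for all z with 0 < |z| < 1. -/
open Complex MeasureTheory

open Metric Set Real intervalIntegral Filter Topology ENNReal

lemma circle_mean (f : ℂ → ℂ) {U : Set ℂ} (hU : IsOpen U) (hf : DifferentiableOn ℂ f U)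
    {c : ℂ} {r : ℝ} (hr : 0 < r) (hsub : closedBall c r ⊆ U) :
    (∫ θ in (0:ℝ)..(2*π), f (circleMap c r θ)) = (2*π : ℝ) • f c := by
  have hcont : ContinuousOn f (closedBall c r) := hf.continuousOn.mono hsub
  have hd : ∀ z ∈ ball c r \ (∅ : Set ℂ), DifferentiableAt ℂ f z := fun z hz =>
    hf.differentiableAt (hU.mem_nhds (hsub (ball_subset_closedBall hz.1)))
  have h := Complex.circleIntegral_sub_center_inv_smul_of_differentiable_on_off_countable
    hr Set.countable_empty hcont hd
  rw [circleIntegral] at h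
  have h2 : ∀ θ : ℝ, deriv (circleMap c r) θ • (circleMap c r θ - c)⁻¹ • f (circleMap c r θ)
      = I • f (circleMap c r θ) := by
    intro θ
    rw [deriv_circleMap, circleMap_sub_center, smul_eq_mul, smul_eq_mul, smul_eq_mul]
    have hne : circleMap 0 r θ ≠ 0 := by
      simpa using circleMap_ne_center (c := (0:ℂ)) hr.ne' (θ := θ)
    field_simp
  simp_rw [h2, intervalIntegral.integral_smul] at h
  have hI : (I : ℂ) ≠ 0 := I_ne_zero
  rw [smul_eq_mul, smul_eq_mul] at h
  have h3 : I * (∫ θ in (0:ℝ)..(2*π), f (circleMap c r θ)) = I * (((2*π:ℝ):ℂ) * f c) := by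
    rw [h]; push_cast; ring
  rw [Complex.real_smul]
  have := mul_left_cancel₀ hI h3
  rw [this]

lemma circle_sq_bound (f : ℂ → ℂ) {U : Set ℂ} (hU : IsOpen U) (hf : DifferentiableOn ℂ f U)
    {c : ℂ} {r : ℝ} (hr : 0 < r) (hsub : closedBall c r ⊆ U) :
    2 * π * ‖f c‖^2 ≤ ∫ θ in (0:ℝ)..(2*π), ‖f (circleMap c r θ)‖^2 := by
  have hcont : ContinuousOn f (closedBall c r) := hf.continuousOn.mono hsub
  set g : ℝ → ℝ := fun θ => ‖f (circleMap c r θ)‖ with hg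
  have hgc : Continuous g := by
    apply Continuous.norm
    apply hcont.comp_continuous (continuous_circleMap c r)
    intro θ
    exact sphere_subset_closedBall (circleMap_mem_sphere c hr.le θ)
  have hA : 2 * π * ‖f c‖ ≤ ∫ θ in (0:ℝ)..(2*π), g θ := by
    have h1 := circle_mean f hU hf hr hsub
    have h2 : ‖(2*π : ℝ) • f c‖ = 2 * π * ‖f c‖ := by
      rw [norm_smul, Real.norm_eq_abs, abs_of_pos (by positivity)]
    calc 2 * π * ‖f c‖ = ‖∫ θ in (0:ℝ)..(2*π), f (circleMap c r θ)‖ := by rw [h1, h2]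
      _ ≤ ∫ θ in (0:ℝ)..(2*π), g θ :=
        intervalIntegral.norm_integral_le_integral_norm (by positivity)
  -- Cauchy-Schwarz via variance
  set A : ℝ := ∫ θ in (0:ℝ)..(2*π), g θ with hAdef
  set a : ℝ := A / (2*π) with hadef
  have hπ : (0:ℝ) < 2 * π := by positivity
  have hgi : IntervalIntegrable g volume 0 (2*π) := hgc.intervalIntegrable _ _
  have hgi2 : IntervalIntegrable (fun θ => g θ^2) volume 0 (2*π) :=
    (hgc.pow 2).intervalIntegrable _ _
  have hvar : (0:ℝ) ≤ ∫ θ in (0:ℝ)..(2*π), (g θ - a)^2 :=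
    intervalIntegral.integral_nonneg (by positivity) (fun θ _ => sq_nonneg _)
  have hexp : (∫ θ in (0:ℝ)..(2*π), (g θ - a)^2)
      = (∫ θ in (0:ℝ)..(2*π), g θ^2) - 2*a*A + a^2*(2*π) := by
    have : ∀ θ : ℝ, (g θ - a)^2 = g θ^2 - (2*a) * g θ + a^2 := fun θ => by ring
    simp_rw [this]
    rw [intervalIntegral.integral_add (IntervalIntegrable.sub hgi2 ((hgi.const_mul _)))
      (intervalIntegrable_const), intervalIntegral.integral_sub hgi2 ((hgi.const_mul _)),
      intervalIntegral.integral_const_mul, intervalIntegral.integral_const]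
    simp only [smul_eq_mul, sub_zero, ← hAdef]
    field_simp
  have hCS : A^2 ≤ (∫ θ in (0:ℝ)..(2*π), g θ^2) * (2*π) := by
    rw [hexp] at hvar
    have hkey : 2*a*A - a^2*(2*π) = A^2/(2*π) := by rw [hadef]; field_simp; ring
    have h6 : A^2/(2*π) ≤ ∫ θ in (0:ℝ)..(2*π), g θ^2 := by linarith
    exact (div_le_iff₀ hπ).mp h6
  have hAnn : 0 ≤ A := le_trans (by positivity) hA
  have hsq : (2*π*‖f c‖)^2 ≤ A^2 := pow_le_pow_left₀ (by positivity) hA 2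
  nlinarith [hsq, hCS, pi_pos]

lemma area_sq_bound (f : ℂ → ℂ) {U : Set ℂ} (hU : IsOpen U) (hf : DifferentiableOn ℂ f U)
    {c : ℂ} {ρ : ℝ} (hρ : 0 < ρ) (hsub : closedBall c ρ ⊆ U) :
    π * ρ^2 * ‖f c‖^2 ≤ ∫ w in ball c ρ, ‖f w‖^2 := by
  set G : ℂ → ℝ := (ball (0:ℂ) ρ).indicator (fun w => ‖f (c + w)‖^2) with hG
  set F : ℝ × ℝ → ℝ := fun p => p.1 * ‖f (circleMap c p.1 p.2)‖^2 with hF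
  set box : Set (ℝ × ℝ) := Ioo (0:ℝ) ρ ×ˢ Ioo (-π) π with hbox
  -- step 1 : total integral of G is the ball integral
  have h1 : ∫ w, G w = ∫ w in ball c ρ, ‖f w‖^2 := by
    have : G = fun w => ((ball c ρ).indicator (fun w => ‖f w‖^2)) (c + w) := by
      funext w
      by_cases hw : w ∈ ball (0:ℂ) ρ
      · rw [hG, indicator_of_mem hw, indicator_of_mem]
        simpa [mem_ball, dist_eq_norm] using hw
      · rw [hG, indicator_of_notMem hw, indicator_of_notMem]
        simpa [mem_ball, dist_eq_norm] using hw
    rw [this, integral_add_left_eq_self _ c, MeasureTheory.integral_indicator measurableSet_ball]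
  -- step 2 : polar change of variables
  have h2 := Complex.integral_comp_polarCoord_symm G
  -- step 3 : identify the polar integrand with the indicator of the box
  have h3 : ∀ p ∈ polarCoord.target,
      p.1 • G (Complex.polarCoord.symm p) = box.indicator F p := by
    rintro ⟨r, θ⟩ hp
    rw [polarCoord_target] at hp
    obtain ⟨hr, hθ⟩ := hp
    have hsymm : Complex.polarCoord.symm (r, θ) = circleMap 0 r θ := by
      rw [Complex.polarCoord_symm_apply, circleMap]
      push_cast
      rw [Complex.exp_mul_I]
      ring
    have habs : ‖circleMap 0 r θ‖ = r := by
      rw [norm_circleMap_zero, abs_of_pos hr]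
    by_cases hrρ : r < ρ
    · have hmem : circleMap 0 r θ ∈ ball (0:ℂ) ρ := by
        simp [mem_ball, Complex.dist_eq, habs, hrρ]
      have hboxmem : (r, θ) ∈ box := ⟨⟨hr, hrρ⟩, hθ⟩
      rw [hsymm, hG]
      rw [indicator_of_mem hmem, indicator_of_mem hboxmem, hF]
      simp only [smul_eq_mul]
      congr 2
      rw [circleMap, circleMap, zero_add]
    · have hmem : circleMap 0 r θ ∉ ball (0:ℂ) ρ := by
        simp [mem_ball, Complex.dist_eq, habs, hrρ]
      have hboxmem : (r, θ) ∉ box := fun h => hrρ h.1.2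
      rw [hsymm, hG, indicator_of_notMem hmem, indicator_of_notMem hboxmem, smul_zero]
  -- step 4 : hence the ball integral is the box integral of F
  have hboxsub : box ⊆ polarCoord.target := by
    rw [polarCoord_target, hbox]
    exact prod_mono Ioo_subset_Ioi_self subset_rfl
  have h4 : ∫ p in box, F p = ∫ w in ball c ρ, ‖f w‖^2 := by
    rw [← h1, ← h2, setIntegral_congr_fun (polarCoord.open_target.measurableSet) h3,
      setIntegral_indicator (measurableSet_Ioo.prod measurableSet_Ioo),
      inter_eq_self_of_subset_right hboxsub]
  -- step 5 : integrability of F on the box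
  have hcont : ContinuousOn f (closedBall c ρ) := hf.continuousOn.mono hsub
  have hFcont : ContinuousOn F (Icc (0:ℝ) ρ ×ˢ Icc (-π) π) := by
    apply ContinuousOn.mul (continuous_fst.continuousOn)
    apply ContinuousOn.pow
    apply ContinuousOn.norm
    apply hcont.comp (by simp only [circleMap]; fun_prop : Continuous fun p : ℝ × ℝ => circleMap c p.1 p.2).continuousOn
    rintro ⟨r, θ⟩ ⟨hr, _⟩
    simp only [mem_closedBall, Complex.dist_eq]
    rw [circleMap_sub_center]
    have : ‖circleMap 0 r θ‖ = |r| := norm_circleMap_zero r θ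
    rw [this, _root_.abs_of_nonneg hr.1]
    exact hr.2
  have hFint : IntegrableOn F box := by
    apply (hFcont.integrableOn_compact (isCompact_Icc.prod isCompact_Icc)).mono_set
    exact prod_mono Ioo_subset_Icc_self Ioo_subset_Icc_self
  -- step 6 : Fubini and the lower bound
  have hFint' : Integrable F ((volume.restrict (Ioo (0:ℝ) ρ)).prod (volume.restrict (Ioo (-π) π))) := by
    rwa [Measure.prod_restrict, ← Measure.volume_eq_prod]
  have h5 : ∫ p in box, F p = ∫ r in Ioo (0:ℝ) ρ, ∫ θ in Ioo (-π) π, F (r, θ) := by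
    rw [hbox, Measure.volume_eq_prod]
    apply setIntegral_prod
    rwa [← Measure.volume_eq_prod]
  -- step 7 : inner lower bound
  have hinner : ∀ r ∈ Ioo (0:ℝ) ρ, 2*π*‖f c‖^2 * r ≤ ∫ θ in Ioo (-π) π, F (r, θ) := by
    intro r hr
    have hsub' : closedBall c r ⊆ U := subset_trans (closedBall_subset_closedBall hr.2.le) hsub
    have hB := circle_sq_bound f hU hf hr.1 hsub'
    have hper : Function.Periodic (fun θ : ℝ => ‖f (circleMap c r θ)‖^2) (2*π) := by
      intro θ
      simp only [(periodic_circleMap c r) θ]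
    have hshift : (∫ θ in (-π)..(π), ‖f (circleMap c r θ)‖^2)
        = ∫ θ in (0:ℝ)..(2*π), ‖f (circleMap c r θ)‖^2 := by
      have h := hper.intervalIntegral_add_eq (-π) 0
      rw [show -π + 2*π = π by ring, zero_add] at h
      exact h
    have hIoo : (∫ θ in Ioo (-π) π, ‖f (circleMap c r θ)‖^2)
        = ∫ θ in (0:ℝ)..(2*π), ‖f (circleMap c r θ)‖^2 := by
      rw [← integral_Ioc_eq_integral_Ioo, ← intervalIntegral.integral_of_le
        (by linarith [pi_pos] : -π ≤ π), hshift]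
    have hcm : (∫ θ in Ioo (-π) π, F (r, θ)) = r * ∫ θ in Ioo (-π) π, ‖f (circleMap c r θ)‖^2 := by
      simp only [hF]
      exact MeasureTheory.integral_const_mul r _
    rw [hcm, hIoo]
    calc 2*π*‖f c‖^2 * r = r * (2*π*‖f c‖^2) := by ring
      _ ≤ r * ∫ θ in (0:ℝ)..(2*π), ‖f (circleMap c r θ)‖^2 :=
        mul_le_mul_of_nonneg_left hB hr.1.le
  -- step 8 : conclude
  have hout : IntegrableOn (fun r => ∫ θ in Ioo (-π) π, F (r, θ)) (Ioo (0:ℝ) ρ) :=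
    hFint'.integral_prod_left
  have hlow : IntegrableOn (fun r : ℝ => 2*π*‖f c‖^2 * r) (Ioo (0:ℝ) ρ) := by
    have hc2 : ContinuousOn (fun r : ℝ => 2*π*‖f c‖^2 * r) (Icc 0 ρ) :=
      Continuous.continuousOn (by fun_prop)
    exact (hc2.integrableOn_compact isCompact_Icc).mono_set Ioo_subset_Icc_self
  have hmono := setIntegral_mono_on hlow hout measurableSet_Ioo hinner
  have hval : ∫ r in Ioo (0:ℝ) ρ, 2*π*‖f c‖^2 * r = π * ρ^2 * ‖f c‖^2 := by
    rw [← integral_Ioc_eq_integral_Ioo, ← intervalIntegral.integral_of_le hρ.le,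
      intervalIntegral.integral_const_mul, integral_id]
    ring
  rw [← h4, h5]
  rw [hval] at hmono
  exact hmono

/-- L² removable singularity: a holomorphic function on the punctured unit disc whose
squared modulus is Lebesgue integrable extends holomorphically across the origin. -/
theorem holomorphic_extension_of_sq_integrable (f : ℂ → ℂ)
    (hf : DifferentiableOn ℂ f {z : ℂ | 0 < ‖z‖ ∧ ‖z‖ < 1})
    (hint : IntegrableOn (fun z : ℂ => ‖f z‖ ^ 2)
      {z : ℂ | 0 < ‖z‖ ∧ ‖z‖ < 1} volume) :
    ∃ g : ℂ → ℂ, DifferentiableOn ℂ g {z : ℂ | ‖z‖ < 1} ∧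
      ∀ z : ℂ, 0 < ‖z‖ → ‖z‖ < 1 → g z = f z := by
  set S : Set ℂ := {z : ℂ | 0 < ‖z‖ ∧ ‖z‖ < 1} with hS
  have hSeq : S = ball (0:ℂ) 1 \ {0} := by
    ext z
    simp [hS, mem_ball, Complex.dist_eq, norm_pos_iff, and_comm]
  have hSopen : IsOpen S := by
    rw [hSeq]
    exact isOpen_ball.sdiff isClosed_singleton
  -- the indicator of ‖f‖² is integrable
  have hnorm : ∀ z, ‖f z‖ ^ 2 = ‖f z‖^2 := fun z => by
    rfl
  have hind : Integrable (S.indicator fun z => ‖f z‖^2) volume := by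
    rw [integrable_indicator_iff (hSopen.measurableSet)]
    exact hint.congr_fun (fun z _ => hnorm z) hSopen.measurableSet
  -- the local L² mass near 0 tends to 0
  have hsz : Tendsto (fun z : ℂ => volume (ball z (‖z‖ / 2))) (𝓝[≠] (0:ℂ)) (𝓝 0) := by
    have heq : ∀ z : ℂ, volume (ball z (‖z‖ / 2))
        = ENNReal.ofReal ((‖z‖ / 2) ^ 2) * volume (ball (0:ℂ) 1) := by
      intro z
      rw [Measure.addHaar_ball _ _ (by positivity), Complex.finrank_real_complex]
    simp_rw [heq]
    have h1 : Tendsto (fun z : ℂ => ENNReal.ofReal ((‖z‖ / 2) ^ 2)) (𝓝[≠] (0:ℂ)) (𝓝 0) := by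
      rw [show (0 : ℝ≥0∞) = ENNReal.ofReal 0 by simp]
      apply (ENNReal.continuous_ofReal.tendsto 0).comp
      have : Tendsto (fun z : ℂ => ‖z‖) (𝓝[≠] (0:ℂ)) (𝓝 0) := by
        apply Tendsto.mono_left _ nhdsWithin_le_nhds
        simpa using (continuous_norm.tendsto (0:ℂ))
      have := ((this.div_const 2).pow 2)
      simpa using this
    have h2 := ENNReal.Tendsto.mul_const h1
      (Or.inr (measure_ball_lt_top : volume (ball (0:ℂ) 1) < ⊤).ne)
    simpa using h2
  -- hence the ball integrals tend to 0
  have htail : Tendsto (fun z : ℂ => ∫ w in ball z (‖z‖ / 2), S.indicator (fun w => ‖f w‖^2) w)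
      (𝓝[≠] (0:ℂ)) (𝓝 0) :=
    hind.tendsto_setIntegral_nhds_zero hsz
  -- the little-o estimate
  have hsubS : ∀ z : ℂ, ‖z‖ < 2/3 → z ≠ 0 → closedBall z (‖z‖ / 2) ⊆ S := by
    intro z hz hz0 w hw
    rw [mem_closedBall, Complex.dist_eq] at hw
    have hzpos : 0 < ‖z‖ := norm_pos_iff.mpr hz0
    constructor
    · have h1 : ‖z‖ - ‖w‖ ≤ ‖w - z‖ := by
        simp only [← norm_neg (w - z), neg_sub]
        exact norm_sub_norm_le z w
      linarith
    · have h2 : ‖w‖ ≤ ‖w - z‖ + ‖z‖ := by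
        skip
        simpa using norm_add_le (w - z) z
      linarith
  have ho : (fun z : ℂ => f z) =o[𝓝[≠] (0:ℂ)] fun z => z⁻¹ := by
    rw [Asymptotics.isLittleO_iff]
    intro c hc
    have hE1 : ∀ᶠ z : ℂ in 𝓝[≠] (0:ℂ), ‖z‖ < 2/3 := by
      apply Eventually.filter_mono nhdsWithin_le_nhds
      have ht : Tendsto (fun z : ℂ => ‖z‖) (𝓝 0) (𝓝 0) := by
        simpa using (continuous_norm.tendsto (0:ℂ))
      exact ht.eventually_lt_const (by norm_num)
    have hE3 : ∀ᶠ z : ℂ in 𝓝[≠] (0:ℂ),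
        (∫ w in ball z (‖z‖ / 2), S.indicator (fun w => ‖f w‖^2) w) < π * c^2 / 4 :=
      htail.eventually_lt_const (by positivity)
    filter_upwards [hE1, self_mem_nhdsWithin, hE3] with z h1 h2 h3
    have hz0 : z ≠ 0 := h2
    have hzpos : 0 < ‖z‖ := norm_pos_iff.mpr hz0
    have hρ : 0 < ‖z‖ / 2 := by positivity
    have hsubz := hsubS z h1 hz0
    have hA := area_sq_bound f hSopen hf hρ hsubz
    have hballS : ball z (‖z‖ / 2) ⊆ S :=
      subset_trans ball_subset_closedBall hsubz
    have hcongr : (∫ w in ball z (‖z‖ / 2), ‖f w‖^2)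
        = ∫ w in ball z (‖z‖ / 2), S.indicator (fun w => ‖f w‖^2) w := by
      apply setIntegral_congr_fun measurableSet_ball
      intro w hw
      rw [indicator_of_mem (hballS hw)]
    rw [hcongr] at hA
    have hkey : π * (‖z‖ / 2)^2 * ‖f z‖^2 < π * c^2 / 4 := lt_of_le_of_lt hA h3
    have habs : ‖z‖ = ‖z‖ := rfl
    have hsq : ‖f z‖^2 ≤ (c * ‖z⁻¹‖)^2 := by
      have hx2 : 0 < ‖z‖ ^ 2 := by positivity
      rw [div_pow] at hkey
      have hXle : ‖f z‖^2 * ‖z‖^2 ≤ c^2 := by nlinarith [hkey, pi_pos]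
      have hrw : (c * ‖z⁻¹‖)^2 = c^2 * (‖z‖^2)⁻¹ := by
        rw [norm_inv, ← habs]; ring
      rw [hrw]
      calc ‖f z‖^2 = ‖f z‖^2 * ‖z‖^2 * (‖z‖^2)⁻¹ := by field_simp
        _ ≤ c^2 * (‖z‖^2)⁻¹ :=
          mul_le_mul_of_nonneg_right hXle (by positivity)
    calc ‖f z‖ = Real.sqrt (‖f z‖^2) := (Real.sqrt_sq (norm_nonneg _)).symm
      _ ≤ Real.sqrt ((c * ‖z⁻¹‖)^2) := Real.sqrt_le_sqrt hsq
      _ = c * ‖z⁻¹‖ := Real.sqrt_sq (by positivity)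
  have hconst : (fun _ : ℂ => f 0) =o[𝓝[≠] (0:ℂ)] fun z => z⁻¹ := by
    rw [Asymptotics.isLittleO_const_left]
    right
    have h1 : Tendsto (fun z : ℂ => ‖z‖) (𝓝[≠] (0:ℂ)) (𝓝[>] 0) := by
      rw [tendsto_nhdsWithin_iff]
      constructor
      · apply Tendsto.mono_left _ nhdsWithin_le_nhds
        simpa using (continuous_norm.tendsto (0:ℂ))
      · filter_upwards [self_mem_nhdsWithin] with z hz
        exact mem_Ioi.mpr (norm_pos_iff.mpr hz)
    have h2 := tendsto_inv_nhdsGT_zero.comp h1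
    have heq2 : (Norm.norm ∘ fun z : ℂ => z⁻¹) = fun z : ℂ => (‖z‖)⁻¹ := by
      funext z; simp [Function.comp, norm_inv]
    rw [heq2]
    exact h2
  have ho' : (fun z : ℂ => f z - f 0) =o[𝓝[≠] (0:ℂ)] fun z => (z - 0)⁻¹ := by
    simpa using ho.sub hconst
  have hd : DifferentiableOn ℂ f (ball (0:ℂ) 1 \ {0}) := by rwa [← hSeq]
  have H := Complex.differentiableOn_update_limUnder_of_isLittleO
    (ball_mem_nhds (0:ℂ) one_pos) hd ho'
  refine ⟨Function.update f 0 (limUnder (𝓝[≠] (0:ℂ)) f), ?_, ?_⟩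
  · have hset : {z : ℂ | ‖z‖ < 1} = ball (0:ℂ) 1 := by
      ext z; simp [mem_ball, Complex.dist_eq]
    rw [hset]
    exact H
  · intro z hz _
    exact Function.update_of_ne (norm_pos_iff.mp hz) _ _
end

section
/- Let F ⊂ ℂ be a finite set and let u : ℂ∖F → ℝ be a continuous function that is bounded above and satisfies the sub-mean value inequality on ℂ∖F. Then u is constant on ℂ∖F. -/
open Complex Real

/-- A function `u` satisfies the sub-mean value inequality on an open set `U ⊆ ℂ` if for
every closed disc contained in `U`, the value at the center is at most the average of the
values on the boundary circle. -/
def SubMeanValueOn (u : ℂ → ℝ) (U : Set ℂ) : Prop :=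
  ∀ c : ℂ, ∀ r : ℝ, 0 < r → Metric.closedBall c r ⊆ U →
    u c ≤ (1 / (2 * Real.pi)) *
      ∫ θ in (0:ℝ)..(2 * Real.pi), u (c + r * Complex.exp (θ * Complex.I))

open Metric Set intervalIntegral MeasureTheory

/-- Mean value property for functions holomorphic on a closed disc. -/
lemma holo_mean_value {f : ℂ → ℂ} {c : ℂ} {r : ℝ} (hr : 0 < r)
    (hd : ∀ z ∈ closedBall c r, DifferentiableAt ℂ f z) :
    (∫ θ in (0:ℝ)..(2 * π), f (circleMap c r θ)) = (2 * π) * f c := by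
  have hcont : ContinuousOn f (closedBall c r) :=
    fun z hz => (hd z hz).continuousAt.continuousWithinAt
  have hC := circleIntegral_sub_center_inv_smul_of_differentiable_on_off_countable hr
      (s := ∅) countable_empty hcont (fun z hz => hd z (ball_subset_closedBall hz.1))
  rw [circleIntegral] at hC
  have key : ∀ θ : ℝ, deriv (circleMap c r) θ • (circleMap c r θ - c)⁻¹ • f (circleMap c r θ)
      = Complex.I * f (circleMap c r θ) := by
    intro θ
    have h1 : circleMap c r θ - c = circleMap 0 r θ := circleMap_sub_center c r θ
    have h2 : circleMap 0 r θ ≠ 0 := by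
      simp [circleMap_eq_center_iff, hr.ne']
    rw [deriv_circleMap, h1, smul_eq_mul, smul_eq_mul]
    field_simp
  rw [intervalIntegral.integral_congr (fun θ _ => key θ)] at hC
  rw [intervalIntegral.integral_const_mul] at hC
  have hI : (Complex.I : ℂ) ≠ 0 := Complex.I_ne_zero
  have : Complex.I * ∫ θ in (0:ℝ)..(2*π), f (circleMap c r θ)
      = Complex.I * ((2 * π) * f c) := by
    rw [hC]; push_cast; ring_nf
  exact mul_left_cancel₀ hI this


/-- Mean value property of `log (dist z p)` on circles not enclosing `p`. -/
lemma log_mean_value {c p : ℂ} {r : ℝ} (hr : 0 < r) (hlt : r < dist c p) :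
    (∫ θ in (0:ℝ)..(2 * π), Real.log (dist (circleMap c r θ) p))
      = (2 * π) * Real.log (dist c p) := by
  have hd0 : (0:ℝ) < dist c p := lt_trans hr hlt
  have hcp : c - p ≠ 0 := sub_ne_zero.mpr (dist_pos.mp hd0)
  set f : ℂ → ℂ := fun z => Complex.log ((z - p) / (c - p)) with hf
  have hslit : ∀ z ∈ closedBall c r, (z - p) / (c - p) ∈ Complex.slitPlane := by
    intro z hz
    have h1 : ‖(z - p) / (c - p) - 1‖ < 1 := by
      have : (z - p) / (c - p) - 1 = (z - c) / (c - p) := by field_simp; ring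
      rw [this, norm_div]
      rw [div_lt_one (by simpa [Complex.dist_eq] using hd0)]
      calc ‖z - c‖ ≤ r := by simpa [Complex.dist_eq] using hz
        _ < ‖c - p‖ := by simpa [Complex.dist_eq] using hlt
    apply Complex.mem_slitPlane_iff.mpr
    left
    have := neg_lt_of_abs_lt (lt_of_le_of_lt (Complex.abs_re_le_norm _) h1)
    simp only [Complex.sub_re, Complex.one_re] at this
    linarith
  have hd : ∀ z ∈ closedBall c r, DifferentiableAt ℂ f z := by
    intro z hz
    have : DifferentiableAt ℂ (fun z : ℂ => (z - p) / (c - p)) z := by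
      apply DifferentiableAt.div_const
      exact (differentiableAt_id.sub (differentiableAt_const _))
    exact (Complex.differentiableAt_log (hslit z hz)).comp z this
  have hmv := holo_mean_value hr hd
  -- take real parts
  have hint : IntervalIntegrable (fun θ => f (circleMap c r θ)) volume 0 (2*π) := by
    apply Continuous.intervalIntegrable
    apply continuous_iff_continuousAt.mpr
    intro θ
    exact ((hd _ (circleMap_mem_closedBall c hr.le θ)).continuousAt).comp
      (continuous_circleMap c r).continuousAt
  have hre := Complex.reCLM.intervalIntegral_comp_comm hint
  rw [hmv] at hre
  have hre2 : (∫ θ in (0:ℝ)..(2*π), (f (circleMap c r θ)).re)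
      = (2*π) * (f c).re := by
    simpa using hre
  have hfc : (f c).re = 0 := by
    rw [hf]
    simp only [Complex.log_re]
    rw [div_self hcp]
    simp
  have habs : ∀ z ∈ closedBall c r, (f z).re = Real.log (dist z p) - Real.log (dist c p) := by
    intro z hz
    have hzp : z - p ≠ 0 := by
      intro h
      have : dist z p = 0 := by simp [Complex.dist_eq, h]
      have h2 : dist c p ≤ dist c z + dist z p := dist_triangle c z p
      rw [this, add_zero] at h2
      have : dist c z ≤ r := by rwa [mem_closedBall, dist_comm] at hz
      linarith
    rw [hf]
    simp only [Complex.log_re, norm_div]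
    rw [Real.log_div (by simpa [Complex.dist_eq, sub_eq_zero] using fun h => hzp (sub_eq_zero.mpr h)) (by simpa [Complex.dist_eq, sub_eq_zero] using fun h => hcp (sub_eq_zero.mpr h))]
    simp [Complex.dist_eq]
  have hsplit : (∫ θ in (0:ℝ)..(2*π), (f (circleMap c r θ)).re)
      = ∫ θ in (0:ℝ)..(2*π), (Real.log (dist (circleMap c r θ) p) - Real.log (dist c p)) := by
    apply intervalIntegral.integral_congr
    intro θ _
    exact habs _ (circleMap_mem_closedBall c hr.le θ)
  have hcont2 : Continuous fun θ => Real.log (dist (circleMap c r θ) p) := by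
    apply Continuous.log
    · exact (continuous_circleMap c r).dist continuous_const
    · intro θ
      have hz := circleMap_mem_closedBall c hr.le θ
      intro h
      have h2 : dist c p ≤ dist c (circleMap c r θ) + dist (circleMap c r θ) p := dist_triangle _ _ _
      rw [h, add_zero] at h2
      have : dist c (circleMap c r θ) ≤ r := by rwa [mem_closedBall, dist_comm] at hz
      linarith
  rw [hsplit, intervalIntegral.integral_sub (hcont2.intervalIntegrable _ _)
    (intervalIntegrable_const), intervalIntegral.integral_const] at hre2
  rw [hfc, mul_zero] at hre2
  simp only [sub_zero, smul_eq_mul] at hre2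
  linarith [hre2]

/-- If `u ∘ circleMap` is continuous, `u c` is at most the circle average, and `u ≤ u c`
on the sphere, then `u = u c` on the sphere. -/
lemma sphere_eqOn_of_subMean {u : ℂ → ℝ} {c : ℂ} {r : ℝ} (hr : 0 < r)
    (hcont : Continuous fun θ => u (circleMap c r θ))
    (hineq : u c ≤ (1 / (2 * π)) * ∫ θ in (0:ℝ)..(2 * π), u (circleMap c r θ))
    (hle : ∀ z ∈ sphere c r, u z ≤ u c) :
    ∀ z ∈ sphere c r, u z = u c := by
  set g : ℝ → ℝ := fun θ => u c - u (circleMap c r θ) with hg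
  have hgc : Continuous g := continuous_const.sub hcont
  have hgnn : ∀ θ, 0 ≤ g θ := fun θ =>
    sub_nonneg.mpr (hle _ (circleMap_mem_sphere c hr.le θ))
  have hgint : IntervalIntegrable g volume 0 (2*π) := hgc.intervalIntegrable _ _
  have hIg : (∫ θ in (0:ℝ)..(2*π), g θ) ≤ 0 := by
    have h2 : (2*π) * u c ≤ ∫ θ in (0:ℝ)..(2*π), u (circleMap c r θ) := by
      have := mul_le_mul_of_nonneg_left hineq (le_of_lt Real.two_pi_pos)
      rw [← mul_assoc] at this
      rw [mul_one_div, div_self Real.two_pi_pos.ne', one_mul] at this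
      linarith
    rw [intervalIntegral.integral_sub intervalIntegrable_const
      (hcont.intervalIntegrable _ _), intervalIntegral.integral_const]
    simp only [smul_eq_mul, sub_zero]
    linarith
  -- g vanishes on Ioo 0 (2π)
  have hIoo : ∀ θ ∈ Ioo (0:ℝ) (2*π), g θ = 0 := by
    intro θ₀ hθ₀
    by_contra hne
    have hpos : 0 < g θ₀ := lt_of_le_of_ne (hgnn θ₀) (Ne.symm hne)
    have : 0 < ∫ θ in (0:ℝ)..(2*π), g θ := by
      rw [intervalIntegral.integral_pos_iff_support_of_nonneg_ae
        (Filter.Eventually.of_forall hgnn) hgint]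
      refine ⟨Real.two_pi_pos, ?_⟩
      have hopen : IsOpen (Function.support g ∩ Ioo 0 (2*π)) := by
        apply IsOpen.inter _ isOpen_Ioo
        have : Function.support g = g ⁻¹' ({0}ᶜ) := by
          ext x; simp [Function.mem_support]
        rw [this]
        exact hgc.isOpen_preimage _ (isOpen_compl_singleton)
      have hne' : (Function.support g ∩ Ioo 0 (2*π)).Nonempty :=
        ⟨θ₀, hne, hθ₀⟩
      calc (0:ENNReal) < volume (Function.support g ∩ Ioo 0 (2*π)) :=
            hopen.measure_pos volume hne'
        _ ≤ volume (Function.support g ∩ Set.Ioc 0 (2*π)) := by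
            apply measure_mono; exact inter_subset_inter_right _ Ioo_subset_Ioc_self
    linarith
  have hIcc : ∀ θ ∈ Icc (0:ℝ) (2*π), g θ = 0 := by
    have h1 : Set.EqOn g 0 (Ioo 0 (2*π)) := fun θ hθ => hIoo θ hθ
    have h2 : Set.EqOn g 0 (closure (Ioo 0 (2*π))) :=
      h1.closure hgc continuous_const
    rwa [closure_Ioo Real.two_pi_pos.ne] at h2
  intro z hz
  have : z ∈ circleMap c r '' Ioc 0 (2*π) := by
    rw [image_circleMap_Ioc c r, abs_of_pos hr]; exact hz
  obtain ⟨θ, hθ, rfl⟩ := this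
  have := hIcc θ (Ioc_subset_Icc_self hθ)
  simp only [hg] at this
  linarith


lemma frontier_nonempty_of_isBounded {G : Set ℂ} (hGo : IsOpen G)
    (hGb : Bornology.IsBounded G) (hne : G.Nonempty) : (frontier G).Nonempty := by
  by_contra h
  rw [Set.not_nonempty_iff_eq_empty] at h
  have hfrG : frontier G = closure G \ G := hGo.frontier_eq
  have hGclosed : IsClosed G := by
    rw [← closure_subset_iff_isClosed]
    intro x hx
    by_contra hxG
    have hxfr : x ∈ frontier G := by rw [hfrG]; exact ⟨hx, hxG⟩
    rw [h] at hxfr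
    exact hxfr
  have huniv : G = Set.univ := IsClopen.eq_univ ⟨hGclosed, hGo⟩ hne
  obtain ⟨R, hR⟩ := hGb.subset_closedBall (0:ℂ)
  have hmem : ((|R| + 1 : ℝ) : ℂ) ∈ G := huniv ▸ Set.mem_univ _
  have := hR hmem
  rw [mem_closedBall] at this
  simp only [Complex.dist_eq, sub_zero, Complex.norm_real, Real.norm_eq_abs] at this
  have h1 : |R| + 1 ≤ R := by rwa [_root_.abs_of_nonneg (by positivity)] at this
  have := le_abs_self R
  linarith


/-- Maximum principle for continuous sub-mean value functions on a bounded open set. -/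
lemma exists_frontier_max {V : Set ℂ} (hVo : IsOpen V) (hVb : Bornology.IsBounded V)
    {u : ℂ → ℝ} (hc : ContinuousOn u (closure V))
    (hsm : ∀ c r, 0 < r → closedBall c r ⊆ V →
      u c ≤ (1 / (2 * π)) * ∫ θ in (0:ℝ)..(2 * π), u (circleMap c r θ))
    {z : ℂ} (hz : z ∈ V) :
    ∃ y ∈ frontier V, ∀ x ∈ closure V, u x ≤ u y := by
  have hK : IsCompact (closure V) := Metric.isCompact_of_isClosed_isBounded isClosed_closure hVb.closure
  have hKne : (closure V).Nonempty := ⟨z, subset_closure hz⟩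
  obtain ⟨x₀, hx₀K, hx₀max⟩ := hK.exists_isMaxOn hKne hc
  rw [isMaxOn_iff] at hx₀max
  have hfrontier : frontier V = closure V \ V := by
    rw [hVo.frontier_eq]
  by_cases hx₀ : x₀ ∈ V
  · -- max attained inside; push to boundary
    have hVne : Vᶜ.Nonempty := by
      obtain ⟨R, hR⟩ := hVb.subset_closedBall (0:ℂ)
      refine ⟨(|R| + 1 : ℝ), fun hmem => ?_⟩
      have := hR hmem
      rw [mem_closedBall] at this
      simp only [Complex.dist_eq, sub_zero] at this
      rw [show ((|R| + 1 : ℝ) : ℂ) = ((|R| + 1 : ℝ) : ℂ) from rfl] at this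
      have habs : ‖((|R| + 1 : ℝ) : ℂ)‖ = |R| + 1 := by
        rw [Complex.norm_real, Real.norm_eq_abs]
        exact _root_.abs_of_nonneg (by positivity)
      rw [habs] at this
      have : |R| ≤ R := by linarith
      have := le_abs_self R
      have := abs_nonneg R
      linarith
    set ρ := infDist x₀ Vᶜ with hρ
    have hρpos : 0 < ρ := by
      rw [hρ]
      exact ((isClosed_compl_iff.mpr hVo).notMem_iff_infDist_pos hVne).mp
        (Set.notMem_compl_iff.mpr hx₀)
    obtain ⟨y, hyVc, hydist⟩ := (isClosed_compl_iff.mpr hVo).exists_infDist_eq_dist hVne x₀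
    have hballs : ∀ s : ℝ, s < ρ → closedBall x₀ s ⊆ V := by
      intro s hs w hw
      by_contra hwV
      have : ρ ≤ dist x₀ w := Metric.infDist_le_dist_of_mem hwV
      rw [mem_closedBall, dist_comm] at hw
      linarith
    set γ : ℝ → ℂ := fun t => x₀ + t • (y - x₀) with hγ
    have hγmem : ∀ t ∈ Ico (0:ℝ) 1, γ t ∈ V := by
      intro t ht
      apply hballs (t * ρ) (by nlinarith [ht.1, ht.2, hρpos])
      rw [mem_closedBall, hγ]
      simp only [dist_self_add_left]
      rw [norm_smul, Real.norm_eq_abs, _root_.abs_of_nonneg ht.1]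
      have : ‖y - x₀‖ = ρ := by
        rw [hρ, hydist, dist_eq_norm, norm_sub_rev]
      rw [this]
    have hγconst : ∀ t ∈ Ico (0:ℝ) 1, u (γ t) = u x₀ := by
      intro t ht
      rcases eq_or_lt_of_le ht.1 with h0 | h0
      · simp [hγ, ← h0]
      · -- t > 0 : use sphere rigidity at radius t * ρ
        have hrpos : 0 < t * ρ := mul_pos h0 hρpos
        have hball : closedBall x₀ (t * ρ) ⊆ V :=
          hballs _ (by nlinarith [ht.2, hρpos])
        have hcont' : Continuous fun θ => u (circleMap x₀ (t*ρ) θ) := by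
          apply continuous_iff_continuousAt.mpr
          intro θ
          have hmem : circleMap x₀ (t*ρ) θ ∈ V :=
            hball (circleMap_mem_closedBall _ hrpos.le θ)
          have : ContinuousAt u (circleMap x₀ (t*ρ) θ) :=
            (hc.continuousAt (mem_nhds_iff.mpr ⟨V, subset_closure, hVo, hmem⟩))
          exact this.comp (continuous_circleMap _ _).continuousAt
        have hEq := sphere_eqOn_of_subMean hrpos hcont' (hsm _ _ hrpos hball)
          (fun w hw => hx₀max w (subset_closure (hball (sphere_subset_closedBall hw))))
        apply hEq
        rw [mem_sphere, hγ]
        simp only [dist_self_add_left]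
        rw [norm_smul, Real.norm_eq_abs, _root_.abs_of_nonneg ht.1]
        rw [show ‖y - x₀‖ = ρ by rw [hρ, hydist, dist_eq_norm, norm_sub_rev]]
    -- pass to the limit t → 1
    have hyK : y ∈ closure V := by
      have : Filter.Tendsto γ (nhdsWithin 1 (Ico (0:ℝ) 1)) (nhds (γ 1)) := by
        apply Filter.Tendsto.mono_left _ nhdsWithin_le_nhds
        exact ((continuous_const.add ((continuous_id.smul continuous_const)))).tendsto 1
      have hγ1 : γ 1 = y := by simp [hγ]
      rw [hγ1] at this
      have hNeBot : (nhdsWithin (1:ℝ) (Ico (0:ℝ) 1)).NeBot := by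
        apply mem_closure_iff_nhdsWithin_neBot.mp
        rw [closure_Ico (by norm_num : (0:ℝ) ≠ 1)]
        exact ⟨by norm_num, by norm_num⟩
      exact mem_closure_of_tendsto this
        (Filter.eventually_of_mem self_mem_nhdsWithin (fun t ht => hγmem t ht))
    have huy : u y = u x₀ := by
      have hNeBot : (nhdsWithin (1:ℝ) (Ico (0:ℝ) 1)).NeBot := by
        apply mem_closure_iff_nhdsWithin_neBot.mp
        rw [closure_Ico (by norm_num : (0:ℝ) ≠ 1)]
        exact ⟨by norm_num, by norm_num⟩
      have htγ : Filter.Tendsto γ (nhdsWithin 1 (Ico (0:ℝ) 1)) (nhdsWithin y (closure V)) := by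
        apply tendsto_nhdsWithin_of_tendsto_nhds_of_eventually_within
        · have : Filter.Tendsto γ (nhdsWithin 1 (Ico (0:ℝ) 1)) (nhds (γ 1)) :=
            Filter.Tendsto.mono_left
              (((continuous_const.add ((continuous_id.smul continuous_const)))).tendsto 1)
              nhdsWithin_le_nhds
          rwa [show γ 1 = y by simp [hγ]] at this
        · exact Filter.eventually_of_mem self_mem_nhdsWithin
            (fun t ht => subset_closure (hγmem t ht))
      have h1 : Filter.Tendsto (u ∘ γ) (nhdsWithin 1 (Ico (0:ℝ) 1)) (nhds (u y)) :=
        (hc y hyK).tendsto.comp htγ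
      have h2 : Filter.Tendsto (u ∘ γ) (nhdsWithin 1 (Ico (0:ℝ) 1)) (nhds (u x₀)) := by
        apply Filter.Tendsto.congr' _ tendsto_const_nhds
        exact Filter.eventually_of_mem self_mem_nhdsWithin
          (fun t ht => (hγconst t ht).symm)
      exact tendsto_nhds_unique h1 h2
    refine ⟨y, ?_, fun x hx => (huy ▸ hx₀max x hx)⟩
    rw [hfrontier]
    exact ⟨hyK, hyVc⟩
  · exact ⟨x₀, hfrontier ▸ ⟨hx₀K, hx₀⟩, hx₀max⟩

/-- Punctured maximum principle: a bounded-above sub-mean-value function on a bounded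
open set minus a finite set of punctures is bounded by its sup on the frontier. -/
lemma punctured_max_principle {G : Set ℂ} (hGo : IsOpen G) (hGb : Bornology.IsBounded G)
    (Q : Finset ℂ) (hQ : ↑Q ⊆ G)
    {u : ℂ → ℝ} (hc : ContinuousOn u (closure G \ ↑Q))
    {M : ℝ} (hM : ∀ x ∈ closure G \ (↑Q : Set ℂ), u x ≤ M)
    (hsm : ∀ c r, 0 < r → closedBall c r ⊆ G \ ↑Q →
      u c ≤ (1 / (2 * π)) * ∫ θ in (0:ℝ)..(2 * π), u (circleMap c r θ))
    {z : ℂ} (hz : z ∈ G \ (↑Q : Set ℂ)) :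
    u z ≤ sSup (u '' frontier G) := by
  have hQclosed : IsClosed (↑Q : Set ℂ) := Q.finite_toSet.isClosed
  have hGQopen : IsOpen (G \ ↑Q) := hGo.sdiff hQclosed
  -- frontier G facts
  have hfrG : frontier G = closure G \ G := hGo.frontier_eq
  have hfrQ : frontier G ⊆ closure G \ ↑Q := by
    rw [hfrG]; exact fun y hy => ⟨hy.1, fun hyQ => hy.2 (hQ hyQ)⟩
  have hKG : IsCompact (closure G) :=
    Metric.isCompact_of_isClosed_isBounded isClosed_closure hGb.closure
  have hfr_compact : IsCompact (frontier G) :=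
    hKG.of_isClosed_subset isClosed_frontier (by rw [hfrG]; exact diff_subset)
  have hfrne : (frontier G).Nonempty := by
    by_contra h
    rw [Set.not_nonempty_iff_eq_empty] at h
    have hGclosed : IsClosed G := by
      rw [← closure_subset_iff_isClosed]
      intro x hx
      by_contra hxG
      have hxfr : x ∈ frontier G := by rw [hfrG]; exact ⟨hx, hxG⟩
      rw [h] at hxfr
      exact hxfr
    have : G = Set.univ := IsClopen.eq_univ ⟨hGclosed, hGo⟩ ⟨z, hz.1⟩
    obtain ⟨R, hR⟩ := hGb.subset_closedBall (0:ℂ)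
    have hmem : ((|R| + 1 : ℝ) : ℂ) ∈ G := this ▸ Set.mem_univ _
    have := hR hmem
    rw [mem_closedBall] at this
    simp only [Complex.dist_eq, sub_zero, Complex.norm_real, Real.norm_eq_abs] at this
    have h1 : |R| + 1 ≤ R := by rwa [_root_.abs_of_nonneg (by positivity)] at this
    have := le_abs_self R
    linarith
  set m₀ := sSup (u '' frontier G) with hm₀def
  have hbdd : BddAbove (u '' frontier G) :=
    (hfr_compact.image_of_continuousOn (hc.mono hfrQ)).bddAbove
  have hm₀ : ∀ y ∈ frontier G, u y ≤ m₀ := fun y hy => le_csSup hbdd ⟨y, hy, rfl⟩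
  have hMm₀ : m₀ ≤ M := by
    obtain ⟨y, hy⟩ := hfrne
    rw [hm₀def]
    refine csSup_le ⟨u y, ⟨y, hy, rfl⟩⟩ ?_
    rintro b ⟨x, hx, rfl⟩
    exact hM x (hfrQ hx)
  -- a big radius
  obtain ⟨B, hB⟩ := hGb.closure.subset_closedBall (0:ℂ)
  set C := |B| + 1 with hCdef
  have hCpos : 0 < C := by positivity
  have hCball : closure G ⊆ closedBall 0 C := hB.trans
    (closedBall_subset_closedBall (by simp [hCdef]; linarith [le_abs_self B, abs_nonneg B]))
  set D := 2 * C + 1 with hDdef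
  have hDpos : 0 < D := by positivity
  have hdistD : ∀ x ∈ closure G, ∀ p ∈ closure G, dist x p < D := by
    intro x hx p hp
    have h1 := mem_closedBall.mp (hCball hx)
    have h2 := mem_closedBall.mp (hCball hp)
    calc dist x p ≤ dist x 0 + dist 0 p := dist_triangle _ _ _
      _ ≤ C + C := by rw [dist_comm 0 p] at *; linarith
      _ < D := by rw [hDdef]; linarith
  set ℓ : ℂ → ℝ := fun x => ∑ p ∈ Q, Real.log (dist x p / D) with hℓdef
  have hℓ_nonpos : ∀ x ∈ closure G, ℓ x ≤ 0 := by
    intro x hx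
    apply Finset.sum_nonpos
    intro p hp
    apply Real.log_nonpos (by positivity)
    rw [div_le_one hDpos]
    exact (hdistD x hx p (subset_closure (hQ hp))).le
  -- main estimate for each ε > 0
  have hkey : ∀ ε : ℝ, 0 < ε → u z ≤ m₀ + ε * (-ℓ z) := by
    intro ε hε
    set δ₀ := D * Real.exp ((m₀ - M) / ε) with hδ₀def
    have hδ₀pos : 0 < δ₀ := by positivity
    -- choose δ
    obtain ⟨δ, hδpos, hδle, hδlt⟩ : ∃ δ : ℝ, 0 < δ ∧ δ ≤ δ₀ ∧ ∀ p ∈ Q, δ < dist z p := by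
      by_cases hQne : Q.Nonempty
      · set d := Q.inf' hQne (fun p => dist z p) with hd
        have hdpos : 0 < d := by
          rw [hd, Finset.lt_inf'_iff]
          intro p hp
          exact dist_pos.mpr (fun h => hz.2 (h ▸ hp))
        refine ⟨min δ₀ (d/2), lt_min hδ₀pos (by linarith), min_le_left _ _, ?_⟩
        intro p hp
        calc min δ₀ (d/2) ≤ d/2 := min_le_right _ _
          _ < d := by linarith
          _ ≤ dist z p := Finset.inf'_le _ hp
      · exact ⟨δ₀, hδ₀pos, le_refl _, fun p hp => absurd ⟨p, hp⟩ hQne⟩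
    set V := G \ ⋃ p ∈ Q, closedBall p δ with hVdef
    have hballs_closed : IsClosed (⋃ p ∈ Q, closedBall p δ) :=
      Q.finite_toSet.isClosed_biUnion (fun p _ => isClosed_closedBall)
    have hVo : IsOpen V := hGo.sdiff hballs_closed
    have hVb : Bornology.IsBounded V := hGb.subset diff_subset
    have hzV : z ∈ V := by
      refine ⟨hz.1, ?_⟩
      simp only [Set.mem_iUnion, mem_closedBall, not_exists]
      intro p hp hdist
      exact absurd hdist (not_le.mpr (hδlt p hp))
    have hclV_G : closure V ⊆ closure G := closure_mono diff_subset
    have hclV_far : ∀ x ∈ closure V, ∀ p ∈ Q, δ ≤ dist x p := by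
      intro x hx p hp
      have hVsub : V ⊆ (ball p δ)ᶜ := by
        intro v hv hvball
        apply hv.2
        exact Set.mem_biUnion hp (ball_subset_closedBall hvball)
      have := (closure_minimal hVsub (isOpen_ball.isClosed_compl)) hx
      simpa [not_lt] using this
    have hclV_Q : closure V ⊆ closure G \ ↑Q := by
      intro x hx
      refine ⟨hclV_G hx, fun hxQ => ?_⟩
      have := hclV_far x hx x hxQ
      simp at this
      linarith
    have hVsubGQ : V ⊆ G \ ↑Q := by
      intro v hv
      refine ⟨hv.1, fun hvQ => ?_⟩
      exact hv.2 (Set.mem_biUnion hvQ (mem_closedBall_self hδpos.le))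
    -- the comparison function
    set w : ℂ → ℝ := fun x => u x + ε * ℓ x with hwdef
    have hℓcont : ∀ x ∈ closure V, ContinuousAt ℓ x := by
      intro x hx
      apply tendsto_finset_sum
      intro p hp
      have hne : dist x p ≠ 0 := by
        have := hclV_far x hx p hp; intro h; rw [h] at this; linarith
      exact (Real.continuousAt_log (by positivity)).comp
        (((continuous_id.dist continuous_const).div_const D).continuousAt)
    have hwcont : ContinuousOn w (closure V) := by
      apply ContinuousOn.add (hc.mono hclV_Q)
      exact ContinuousOn.const_smul (fun x hx => (hℓcont x hx).continuousWithinAt) ε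
    have hucont_at : ∀ x ∈ G \ (↑Q : Set ℂ), ContinuousAt u x := by
      intro x hx
      exact hc.continuousAt (mem_nhds_iff.mpr
        ⟨G \ ↑Q, fun v hv => ⟨subset_closure hv.1, hv.2⟩, hGQopen, hx⟩)
    have hwsm : ∀ c r, 0 < r → closedBall c r ⊆ V →
        w c ≤ (1 / (2 * π)) * ∫ θ in (0:ℝ)..(2 * π), w (circleMap c r θ) := by
      intro c r hr hball
      have hballGQ : closedBall c r ⊆ G \ ↑Q := fun x hx => hVsubGQ (hball hx)
      have hcmem : ∀ θ, circleMap c r θ ∈ closedBall c r :=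
        circleMap_mem_closedBall c hr.le
      have huint : IntervalIntegrable (fun θ => u (circleMap c r θ)) volume 0 (2*π) := by
        apply Continuous.intervalIntegrable
        apply continuous_iff_continuousAt.mpr
        intro θ
        exact (hucont_at _ (hballGQ (hcmem θ))).comp (continuous_circleMap c r).continuousAt
      have hfar : ∀ p ∈ Q, r < dist c p := by
        intro p hp
        by_contra hle'
        push_neg at hle'
        exact (hVsubGQ (hball (mem_closedBall'.mpr hle'))).2 hp
      have hℓint_eq : (∫ θ in (0:ℝ)..(2*π), ℓ (circleMap c r θ)) = (2*π) * ℓ c := by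
        rw [hℓdef]
        rw [intervalIntegral.integral_finset_sum]
        · rw [Finset.mul_sum]
          apply Finset.sum_congr rfl
          intro p hp
          have hlog : ∀ x : ℂ, x ≠ p → Real.log (dist x p / D)
              = Real.log (dist x p) - Real.log D := by
            intro x hxp
            rw [Real.log_div (dist_ne_zero.mpr hxp) hDpos.ne']
          have hcirc_ne : ∀ θ : ℝ, circleMap c r θ ≠ p := by
            intro θ h
            have := hfar p hp
            have h2 : dist c p ≤ r := by
              rw [← h]
              simpa [dist_comm] using mem_closedBall.mp (hcmem θ)
            linarith
          have hcp : c ≠ p := by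
            intro h
            have := hfar p hp
            rw [h, dist_self] at this
            linarith
          rw [intervalIntegral.integral_congr (fun θ _ => hlog _ (hcirc_ne θ))]
          rw [intervalIntegral.integral_sub _ intervalIntegrable_const]
          · rw [log_mean_value hr (hfar p hp), intervalIntegral.integral_const,
              hlog c hcp]
            simp only [smul_eq_mul, sub_zero]
            ring
          · apply Continuous.intervalIntegrable
            apply Continuous.log ((continuous_circleMap c r).dist continuous_const)
            intro θ
            exact dist_ne_zero.mpr (hcirc_ne θ)
        · intro p hp
          apply Continuous.intervalIntegrable
          apply Continuous.log
          · exact ((continuous_circleMap c r).dist continuous_const).div_const D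
          · intro θ
            have : circleMap c r θ ≠ p := by
              intro h
              have := hfar p hp
              have h2 : dist c p ≤ r := by
                rw [← h]
                simpa [dist_comm] using mem_closedBall.mp (hcmem θ)
              linarith
            have := dist_ne_zero.mpr this
            positivity
      have hℓint : IntervalIntegrable (fun θ => ℓ (circleMap c r θ)) volume 0 (2*π) := by
        apply Continuous.intervalIntegrable
        apply continuous_iff_continuousAt.mpr
        intro θ
        have : circleMap c r θ ∈ closure V := subset_closure (hball (hcmem θ))
        exact (hℓcont _ this).comp (continuous_circleMap c r).continuousAt
      have hsplit : (∫ θ in (0:ℝ)..(2*π), w (circleMap c r θ))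
          = (∫ θ in (0:ℝ)..(2*π), u (circleMap c r θ)) + ε * ((2*π) * ℓ c) := by
        rw [hwdef]
        simp only []
        rw [intervalIntegral.integral_add huint (hℓint.const_mul ε),
          intervalIntegral.integral_const_mul, hℓint_eq]
      rw [hsplit, mul_add]
      have h1 := hsm c r hr hballGQ
      have h2 : (1/(2*π)) * (ε * ((2*π) * ℓ c)) = ε * ℓ c := by
        field_simp
      rw [h2, hwdef]
      simp only []
      linarith
    obtain ⟨y, hyfr, hymax⟩ := exists_frontier_max hVo hVb hwcont hwsm hzV
    have hwzy : w z ≤ w y := hymax z (subset_closure hzV)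
    have hyclV : y ∈ closure V := by
      rw [hVo.frontier_eq] at hyfr; exact hyfr.1
    have hynotV : y ∉ V := by
      rw [hVo.frontier_eq] at hyfr; exact hyfr.2
    have hwy_le : w y ≤ m₀ := by
      by_cases hyG : y ∈ G
      · -- y must be on a small sphere
        have hyball : y ∈ ⋃ p ∈ Q, closedBall p δ := by
          by_contra h
          exact hynotV ⟨hyG, h⟩
        obtain ⟨p₀, hp₀Q, hyp₀⟩ := by
          simpa only [Set.mem_iUnion, exists_prop] using hyball
        have hyp₀' : dist y p₀ ≤ δ := mem_closedBall.mp hyp₀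
        have huyM : u y ≤ M := hM y (hclV_Q hyclV)
        have hyp₀pos : (0:ℝ) < dist y p₀ := lt_of_lt_of_le hδpos (hclV_far y hyclV p₀ hp₀Q)
        have hterm : Real.log (dist y p₀ / D) ≤ Real.log (δ / D) := by
          apply Real.log_le_log (div_pos hyp₀pos hDpos)
          exact div_le_div_of_nonneg_right hyp₀' hDpos.le
        have hrest : ∑ p ∈ Q.erase p₀, Real.log (dist y p / D) ≤ 0 := by
          apply Finset.sum_nonpos
          intro p hp
          apply Real.log_nonpos (by positivity)
          rw [div_le_one hDpos]
          exact (hdistD y (hclV_G hyclV) p (subset_closure (hQ (Finset.mem_of_mem_erase hp)))).le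
        have hℓy : ℓ y ≤ Real.log (δ / D) := by
          rw [hℓdef]
          simp only []
          rw [← Finset.add_sum_erase Q _ hp₀Q]
          linarith
        have hlogδ : Real.log (δ / D) ≤ (m₀ - M) / ε := by
          calc Real.log (δ / D) ≤ Real.log (δ₀ / D) := by
                apply Real.log_le_log (div_pos hδpos hDpos)
                exact div_le_div_of_nonneg_right hδle hDpos.le
            _ = (m₀ - M) / ε := by
                rw [hδ₀def, mul_comm, mul_div_assoc, div_self hDpos.ne', mul_one,
                  Real.log_exp]
        have : ε * ℓ y ≤ m₀ - M := by
          calc ε * ℓ y ≤ ε * Real.log (δ / D) := by nlinarith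
            _ ≤ ε * ((m₀ - M) / ε) := by nlinarith
            _ = m₀ - M := by field_simp
        rw [hwdef]
        simp only []
        linarith
      · -- y on the frontier of G
        have hyfrG : y ∈ frontier G := by
          rw [hfrG]
          exact ⟨hclV_G hyclV, hyG⟩
        have h1 : u y ≤ m₀ := hm₀ y hyfrG
        have h2 : ℓ y ≤ 0 := hℓ_nonpos y (hclV_G hyclV)
        rw [hwdef]
        simp only []
        nlinarith
    have hℓz : ℓ z ≤ 0 := hℓ_nonpos z (subset_closure hz.1)
    have hwz : u z + ε * ℓ z ≤ m₀ := le_trans hwzy hwy_le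
    linarith
  -- conclude
  have hℓz_nonneg : 0 ≤ -ℓ z := by
    have := hℓ_nonpos z (subset_closure hz.1); linarith
  apply le_of_forall_pos_le_add
  intro ε' hε'
  have hεpos : 0 < ε' / (-ℓ z + 1) := by positivity
  have := hkey _ hεpos
  have hfrac : (ε' / (-ℓ z + 1)) * (-ℓ z) ≤ ε' := by
    rw [div_mul_eq_mul_div, div_le_iff₀ (by linarith)]
    nlinarith
  linarith

/-- A continuous function on `ℂ` minus a finite set which is bounded above and satisfies
the sub-mean value inequality there is constant. -/
theorem constant_of_subMeanValue_of_bddAbove (F : Set ℂ) (hF : F.Finite)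
    (u : ℂ → ℝ) (hc : ContinuousOn u Fᶜ) (hb : BddAbove (u '' Fᶜ))
    (hsm : SubMeanValueOn u Fᶜ) :
    ∀ z ∈ Fᶜ, ∀ w ∈ Fᶜ, u z = u w := by
  have hFclosed : IsClosed F := hF.isClosed
  have hUopen : IsOpen Fᶜ := hFclosed.isOpen_compl
  have hsm' : ∀ c : ℂ, ∀ r : ℝ, 0 < r → closedBall c r ⊆ Fᶜ →
      u c ≤ (1 / (2 * π)) * ∫ θ in (0:ℝ)..(2 * π), u (circleMap c r θ) :=
    fun c r hr h => hsm c r hr h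
  have hcontAt : ∀ x ∈ Fᶜ, ContinuousAt u x :=
    fun x hx => hc.continuousAt (hUopen.mem_nhds hx)
  have hcontCirc : ∀ (c : ℂ) (r : ℝ), 0 < r → closedBall c r ⊆ Fᶜ →
      Continuous fun θ => u (circleMap c r θ) := by
    intro c r hr hsub
    apply continuous_iff_continuousAt.mpr
    intro θ
    exact (hcontAt _ (hsub (circleMap_mem_closedBall c hr.le θ))).comp
      (continuous_circleMap c r).continuousAt
  intro z hzF w hwF
  have hne : (u '' Fᶜ).Nonempty := ⟨u z, z, hzF, rfl⟩
  set M := sSup (u '' Fᶜ) with hMdef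
  have hM : ∀ x ∈ Fᶜ, u x ≤ M := fun x hx => le_csSup hb ⟨x, hx, rfl⟩
  -- fix a good circle around z
  obtain ⟨r₁, hr₁pos, hr₁⟩ := Metric.isOpen_iff.mp hUopen z hzF
  set r₀ := r₁ / 2 with hr₀def
  have hr₀pos : 0 < r₀ := by rw [hr₀def]; linarith
  have hball₀ : closedBall z r₀ ⊆ Fᶜ :=
    (closedBall_subset_ball (by rw [hr₀def]; linarith)).trans hr₁
  have hsphere_sub : sphere z r₀ ⊆ Fᶜ := (sphere_subset_closedBall).trans hball₀
  set m₀ := sSup (u '' sphere z r₀) with hm₀def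
  have hsphne : (sphere z r₀).Nonempty := NormedSpace.sphere_nonempty.mpr hr₀pos.le
  have hbdd₀ : BddAbove (u '' sphere z r₀) :=
    ((isCompact_sphere z r₀).image_of_continuousOn (hc.mono hsphere_sub)).bddAbove
  have hm₀le : ∀ y ∈ sphere z r₀, u y ≤ m₀ := fun y hy => le_csSup hbdd₀ ⟨y, hy, rfl⟩
  have hm₀M : m₀ ≤ M := by
    obtain ⟨y, hy⟩ := hsphne
    rw [hm₀def]
    refine csSup_le ⟨u y, y, hy, rfl⟩ ?_
    rintro b' ⟨x, hx, rfl⟩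
    exact hM x (hsphere_sub hx)
  -- Claim A : u ≤ m₀ everywhere on Fᶜ
  have hclaimA : ∀ x ∈ Fᶜ, u x ≤ m₀ := by
    intro x hxF
    rcases lt_trichotomy (dist x z) r₀ with hlt | heq | hgt
    · -- inside the disc : basic maximum principle (no punctures in the disc)
      have hkey := punctured_max_principle (G := ball z r₀) isOpen_ball isBounded_ball
        (∅ : Finset ℂ) (by simp) (u := u) (M := M) ?_ ?_ ?_ (z := x) ?_
      · rwa [frontier_ball z hr₀pos.ne'] at hkey
      · rw [Finset.coe_empty, diff_empty, closure_ball z hr₀pos.ne']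
        exact hc.mono hball₀
      · rw [Finset.coe_empty, diff_empty, closure_ball z hr₀pos.ne']
        exact fun y hy => hM y (hball₀ hy)
      · rw [Finset.coe_empty, diff_empty]
        exact fun c ρ hρ hsub => hsm' c ρ hρ
          (hsub.trans ((ball_subset_closedBall).trans hball₀))
      · rw [Finset.coe_empty, diff_empty]
        exact mem_ball.mpr hlt
    · exact hm₀le x (mem_sphere.mpr heq)
    · -- outside the disc : annulus argument
      set d := dist x z with hd
      apply le_of_forall_pos_le_add
      intro η hη
      set L := Real.log (d / r₀) with hL
      have hLpos : 0 < L := Real.log_pos ((one_lt_div hr₀pos).mpr hgt)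
      set A := (M - m₀) * L with hA
      have hAnn : 0 ≤ A := mul_nonneg (by linarith) hLpos.le
      obtain ⟨RF, hRF⟩ := hF.isBounded.subset_closedBall z
      set R := max (r₀ * Real.exp (A / η + 1)) (max (|RF| + 1) (d + 1)) with hRdef
      have hexp1 : (1:ℝ) ≤ Real.exp (A/η + 1) := by
        rw [← Real.exp_zero]
        apply Real.exp_le_exp.mpr
        positivity
      have hRr₀exp : r₀ * Real.exp (A/η+1) ≤ R := le_max_left _ _
      have hlogR : A/η + 1 ≤ Real.log (R / r₀) := by
        have h2 : Real.exp (A/η+1) ≤ R / r₀ := (le_div_iff₀ hr₀pos).mpr (by linarith)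
        calc A/η + 1 = Real.log (Real.exp (A/η+1)) := (Real.log_exp _).symm
          _ ≤ Real.log (R/r₀) := Real.log_le_log (Real.exp_pos _) h2
      have hlogRpos : 0 < Real.log (R/r₀) := lt_of_lt_of_le (by positivity) hlogR
      have hr₀R : r₀ < R := by
        have h3 : (1:ℝ) < Real.exp (A/η+1) := by
          rw [← Real.exp_zero]
          exact Real.exp_lt_exp.mpr (by positivity)
        nlinarith
      have hdR : d < R := by
        have : d + 1 ≤ R := le_trans (le_max_right _ _) (le_max_right _ _)
        linarith
      have hRFR : RF < R := by
        have : |RF| + 1 ≤ R := le_trans (le_max_left _ _) (le_max_right _ _)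
        have := le_abs_self RF
        linarith
      set G := ball z R \ closedBall z r₀ with hG
      have hGopen : IsOpen G := isOpen_ball.sdiff isClosed_closedBall
      have hGb : Bornology.IsBounded G := (isBounded_ball).subset diff_subset
      have hclG : closure G ⊆ closedBall z R ∩ (ball z r₀)ᶜ := by
        apply closure_minimal ?_ (isClosed_closedBall.inter (isOpen_ball.isClosed_compl))
        intro y hy
        exact ⟨ball_subset_closedBall hy.1, fun hb' => hy.2 (ball_subset_closedBall hb')⟩
      have hFG : (F ∩ G).Finite := hF.inter_of_left G
      set Qs := hFG.toFinset with hQs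
      have hQcoe : (↑Qs : Set ℂ) = F ∩ G := Set.Finite.coe_toFinset _
      have hQsub : (↑Qs : Set ℂ) ⊆ G := by rw [hQcoe]; exact inter_subset_right
      have hGQF : ∀ y, y ∈ closure G → y ∉ (↑Qs : Set ℂ) → y ∈ Fᶜ := by
        intro y hy hyQ hyF
        apply hyQ
        rw [hQcoe]
        refine ⟨hyF, ?_, fun hmem => hball₀ hmem hyF⟩
        have : dist y z ≤ RF := mem_closedBall.mp (hRF hyF)
        exact mem_ball.mpr (lt_of_le_of_lt this hRFR)
      have hGQF' : ∀ y, y ∈ G \ (↑Qs : Set ℂ) → y ∈ Fᶜ :=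
        fun y hy => hGQF y (subset_closure hy.1) hy.2
      set b := (M - m₀) / Real.log (R / r₀) with hbdef
      have hbnn : 0 ≤ b := div_nonneg (by linarith) hlogRpos.le
      set v : ℂ → ℝ := fun y => u y - b * Real.log (dist y z) with hv
      have hdistlb : ∀ y ∈ closure G, r₀ ≤ dist y z := by
        intro y hy
        have := (hclG hy).2
        rw [mem_compl_iff, mem_ball, not_lt] at this
        exact this
      have hlogcont : ContinuousOn (fun y : ℂ => Real.log (dist y z)) (closure G \ ↑Qs) := by
        apply ContinuousOn.log ((continuous_id.dist continuous_const).continuousOn)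
        intro y hy
        simp only [id_eq]
        have := hdistlb y hy.1; intro h; rw [h] at this; linarith
      have hucont' : ContinuousOn u (closure G \ ↑Qs) :=
        hc.mono (fun y hy => hGQF y hy.1 hy.2)
      have hvc : ContinuousOn v (closure G \ ↑Qs) :=
        hucont'.sub (continuousOn_const.mul hlogcont)
      have hvM : ∀ y ∈ closure G \ (↑Qs : Set ℂ), v y ≤ M - b * Real.log r₀ := by
        intro y hy
        have h1 : u y ≤ M := hM y (hGQF y hy.1 hy.2)
        have h2 : Real.log r₀ ≤ Real.log (dist y z) :=
          Real.log_le_log hr₀pos (hdistlb y hy.1)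
        have h3 : b * Real.log r₀ ≤ b * Real.log (dist y z) :=
          mul_le_mul_of_nonneg_left h2 hbnn
        show u y - b * Real.log (dist y z) ≤ M - b * Real.log r₀
        linarith
      have hvsm : ∀ c ρ, 0 < ρ → closedBall c ρ ⊆ G \ ↑Qs →
          v c ≤ (1 / (2 * π)) * ∫ θ in (0:ℝ)..(2*π), v (circleMap c ρ θ) := by
        intro c ρ hρ hsub
        have hsubF : closedBall c ρ ⊆ Fᶜ := fun y hy => hGQF' y (hsub hy)
        have h1 := hsm' c ρ hρ hsubF
        have hzc : ρ < dist c z := by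
          have hno : z ∉ closedBall c ρ := by
            intro hmem
            exact ((hsub hmem).1.2 (mem_closedBall_self hr₀pos.le))
          rw [mem_closedBall] at hno
          push_neg at hno
          rwa [dist_comm]
        have hlmv := log_mean_value hρ hzc
        have hIu : IntervalIntegrable (fun θ => u (circleMap c ρ θ)) volume 0 (2*π) :=
          (hcontCirc c ρ hρ hsubF).intervalIntegrable _ _
        have hcirc_ne : ∀ θ : ℝ, dist (circleMap c ρ θ) z ≠ 0 := by
          intro θ
          have h2 : dist c (circleMap c ρ θ) ≤ ρ := by
            rw [dist_comm]
            exact mem_closedBall.mp (circleMap_mem_closedBall c hρ.le θ)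
          have h3 := dist_triangle c (circleMap c ρ θ) z
          intro h
          rw [h, add_zero] at h3
          linarith
        have hIlog : IntervalIntegrable (fun θ => Real.log (dist (circleMap c ρ θ) z))
            volume 0 (2*π) := by
          apply Continuous.intervalIntegrable
          exact Continuous.log ((continuous_circleMap c ρ).dist continuous_const) hcirc_ne
        have hsplit : (∫ θ in (0:ℝ)..(2*π), v (circleMap c ρ θ))
            = (∫ θ in (0:ℝ)..(2*π), u (circleMap c ρ θ)) - b * ((2*π) * Real.log (dist c z)) := by
          rw [hv]
          simp only []
          rw [intervalIntegral.integral_sub hIu (hIlog.const_mul b),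
            intervalIntegral.integral_const_mul, hlmv]
        rw [hsplit]
        have h2 : (1/(2*π)) * ((∫ θ in (0:ℝ)..(2*π), u (circleMap c ρ θ))
            - b * ((2*π) * Real.log (dist c z)))
            = (1/(2*π)) * (∫ θ in (0:ℝ)..(2*π), u (circleMap c ρ θ))
              - b * Real.log (dist c z) := by
          field_simp
        rw [h2, hv]
        simp only []
        linarith
      have hxG : x ∈ G \ (↑Qs : Set ℂ) := by
        constructor
        · exact ⟨mem_ball.mpr hdR, by rw [mem_closedBall]; push_neg; exact hgt⟩
        · rw [hQcoe]
          exact fun hmem => hxF hmem.1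
      have hkey := punctured_max_principle hGopen hGb Qs hQsub hvc hvM hvsm hxG
      -- bound the sup over the frontier
      have hfr_sub : frontier G ⊆ sphere z R ∪ sphere z r₀ := by
        intro y hy
        have hy1 : y ∈ closure G := frontier_subset_closure hy
        have hy2 : y ∉ G := by
          rw [hGopen.frontier_eq] at hy
          exact hy.2
        have hyc := hclG hy1
        by_cases hcase : y ∈ ball z R
        · right
          have : y ∈ closedBall z r₀ := by
            by_contra h
            exact hy2 ⟨hcase, h⟩
          rw [mem_sphere]
          have h1 := mem_closedBall.mp this
          have h2 := hdistlb y hy1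
          linarith
        · left
          rw [mem_sphere]
          have h1 := mem_closedBall.mp hyc.1
          rw [mem_ball, not_lt] at hcase
          linarith
      have hfrne := frontier_nonempty_of_isBounded hGopen hGb ⟨x, hxG.1⟩
      have hlogdiv : Real.log (R/r₀) = Real.log R - Real.log r₀ :=
        Real.log_div (by linarith : R ≠ 0) hr₀pos.ne'
      have hbRr : b * (Real.log R - Real.log r₀) = M - m₀ := by
        rw [hbdef, ← hlogdiv, div_mul_cancel₀ _ hlogRpos.ne']
      have hvfr : ∀ y ∈ frontier G, v y ≤ m₀ - b * Real.log r₀ := by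
        intro y hy
        rcases hfr_sub hy with hyR | hyr₀
        · have hyF : y ∈ Fᶜ := by
            intro hyF'
            have h1 : dist y z ≤ RF := mem_closedBall.mp (hRF hyF')
            have h2 : dist y z = R := mem_sphere.mp hyR
            linarith
          have h1 : u y ≤ M := hM y hyF
          have h2 : Real.log (dist y z) = Real.log R := by rw [mem_sphere.mp hyR]
          rw [hv]
          simp only []
          rw [h2]
          linarith
        · have h1 : u y ≤ m₀ := hm₀le y hyr₀
          have h2 : Real.log (dist y z) = Real.log r₀ := by rw [mem_sphere.mp hyr₀]
          rw [hv]
          simp only []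
          rw [h2]
          linarith
      have hsup_le : sSup (v '' frontier G) ≤ m₀ - b * Real.log r₀ := by
        obtain ⟨y, hy⟩ := hfrne
        refine csSup_le ⟨v y, y, hy, rfl⟩ ?_
        rintro b' ⟨y', hy', rfl⟩
        exact hvfr y' hy'
      have hvx : v x ≤ m₀ - b * Real.log r₀ := le_trans hkey hsup_le
      have hlogd : Real.log d - Real.log r₀ = L := by
        rw [hL, Real.log_div (ne_of_gt (lt_trans hr₀pos hgt)) hr₀pos.ne']
      have hbL : b * L ≤ η := by
        have h1 : b * L = A / Real.log (R/r₀) := by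
          rw [hbdef, hA, div_mul_eq_mul_div]
        have h2 : A / Real.log (R/r₀) ≤ A / (A/η + 1) :=
          div_le_div_of_nonneg_left hAnn (by positivity) hlogR
        have h3 : A / (A/η + 1) ≤ η := by
          rw [div_le_iff₀ (by positivity)]
          have : η * (A/η + 1) = A + η := by field_simp
          rw [this]
          linarith
        linarith
      have hux : u x = v x + b * Real.log d := by
        rw [hv]
        simp only []
        rw [← hd]
        ring
      have hfinal : u x ≤ m₀ + b * L := by
        rw [hux]
        have : b * Real.log d - b * Real.log r₀ = b * L := by
          rw [← hlogd]; ring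
        linarith
      nlinarith
  -- hence the sup is attained on the circle
  have hMm₀eq : M = m₀ := by
    apply le_antisymm ?_ hm₀M
    rw [hMdef]
    refine csSup_le hne ?_
    rintro b' ⟨x, hx, rfl⟩
    exact hclaimA x hx
  obtain ⟨x₀, hx₀s, hx₀max⟩ := (isCompact_sphere z r₀).exists_isMaxOn hsphne
    (hc.mono hsphere_sub)
  have hux₀ : u x₀ = M := by
    apply le_antisymm (hM x₀ (hsphere_sub hx₀s))
    rw [hMm₀eq, hm₀def]
    refine csSup_le ⟨u x₀, x₀, hx₀s, rfl⟩ ?_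
    rintro b' ⟨y, hy, rfl⟩
    exact hx₀max hy
  -- clopen argument
  set S := {y : ℂ | y ∈ Fᶜ ∧ u y = M} with hS
  have hSopen : IsOpen S := by
    rw [Metric.isOpen_iff]
    intro s hs
    obtain ⟨ρ₁, hρ₁pos, hρ₁⟩ := Metric.isOpen_iff.mp hUopen s hs.1
    refine ⟨ρ₁/2, by linarith, ?_⟩
    intro y hy
    have hyF : y ∈ Fᶜ := hρ₁ (ball_subset_ball (by linarith) hy)
    refine ⟨hyF, ?_⟩
    rcases eq_or_ne y s with rfl | hne'
    · exact hs.2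
    · set r' := dist y s with hr'
      have hr'pos : 0 < r' := dist_pos.mpr hne'
      have hr'lt : r' < ρ₁ := by
        have := mem_ball.mp hy
        rw [hr']
        linarith
      have hball' : closedBall s r' ⊆ Fᶜ :=
        (closedBall_subset_ball hr'lt).trans hρ₁
      have hEq := sphere_eqOn_of_subMean hr'pos (hcontCirc s r' hr'pos hball')
        (hsm' s r' hr'pos hball')
        (fun y' hy' => by
          rw [hs.2]
          exact hM y' (hball' (sphere_subset_closedBall hy')))
      have := hEq y (mem_sphere.mpr rfl)
      rw [this, hs.2]
  have hTopen : IsOpen (Fᶜ ∩ u ⁻¹' ({M}ᶜ)) :=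
    hc.isOpen_inter_preimage hUopen isOpen_compl_singleton
  have hconn : IsPreconnected (Fᶜ : Set ℂ) :=
    (hF.countable.isConnected_compl_of_one_lt_rank
      (by rw [rank_real_complex]; exact Cardinal.one_lt_two)).isPreconnected
  have hall : ∀ y ∈ Fᶜ, u y = M := by
    intro y hy
    by_contra hne'
    obtain ⟨t, htF, htS, htT⟩ := hconn S (Fᶜ ∩ u ⁻¹' ({M}ᶜ)) hSopen hTopen
      (fun y' hy' => by
        rcases eq_or_ne (u y') M with h | h
        · exact Or.inl ⟨hy', h⟩
        · exact Or.inr ⟨hy', h⟩)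
      ⟨x₀, hsphere_sub hx₀s, hsphere_sub hx₀s, hux₀⟩
      ⟨y, hy, hy, hne'⟩
    exact htT.2 htS.2
  rw [hall z hzF, hall w hwF]
end

section
/- Let u be a continuous real-valued function on the punctured unit disc {z ∈ ℂ : 0 < |z| < 1} that is bounded above and satisfies the sub-mean value inequality on the punctured unit disc. Then for every real number L such that u(z) ≥ L for points z arbitrarily close to 0 (i.e. frequently along the punctured neighborhood filter of 0), and for every r with 0 < r < 1, one has L ≤ (1/(2π)) ∫₀^{2π} u(r e^{iθ}) dθ. -/
open Complex Real Filter
open Metric intervalIntegral Set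

/-- Mean value property (real part) for functions holomorphic on a closed disc. -/
lemma re_meanvalue {g : ℂ → ℂ} {c : ℂ} {ρ : ℝ} (hρ : 0 < ρ)
    (hg : DifferentiableOn ℂ g (Metric.closedBall c ρ)) :
    ∫ θ in (0:ℝ)..(2*π), (g (c + ρ * Complex.exp (θ * Complex.I))).re
      = 2*π*(g c).re := by
  have hcauchy := hg.circleIntegral_sub_inv_smul (Metric.mem_ball_self hρ)
  rw [circleIntegral] at hcauchy
  have h1 : ∀ θ : ℝ, deriv (circleMap c ρ) θ • ((circleMap c ρ θ - c)⁻¹ • g (circleMap c ρ θ))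
      = Complex.I * g (circleMap c ρ θ) := by
    intro θ
    rw [deriv_circleMap, circleMap_sub_center, smul_eq_mul, smul_eq_mul]
    have hne : circleMap 0 ρ θ ≠ 0 := by
      simpa using circleMap_ne_center (c := (0:ℂ)) hρ.ne' (θ := θ)
    field_simp
  simp only [h1] at hcauchy
  rw [intervalIntegral.integral_const_mul] at hcauchy
  have hint : (∫ θ in (0:ℝ)..(2*π), g (circleMap c ρ θ)) = 2*π* g c := by
    have hIne : (Complex.I : ℂ) ≠ 0 := Complex.I_ne_zero
    apply mul_left_cancel₀ hIne
    rw [hcauchy, smul_eq_mul]; push_cast; ring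
  have hii : IntervalIntegrable (fun θ => g (circleMap c ρ θ)) MeasureTheory.volume 0 (2*π) := by
    apply Continuous.intervalIntegrable
    exact hg.continuousOn.comp_continuous (continuous_circleMap c ρ)
      (fun θ => circleMap_mem_closedBall c hρ.le θ)
  have := Complex.reCLM.intervalIntegral_comp_comm hii
  have h2 : ∀ θ : ℝ, circleMap c ρ θ = c + ρ * Complex.exp (θ * Complex.I) := fun θ => rfl
  calc ∫ θ in (0:ℝ)..(2*π), (g (c + ρ * Complex.exp (θ * Complex.I))).re
      = Complex.reCLM (∫ θ in (0:ℝ)..(2*π), g (circleMap c ρ θ)) := by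
        rw [← this]; simp only [h2]; rfl
    _ = 2*π*(g c).re := by rw [hint]; simp

lemma circle_abs_pos {c : ℂ} {ρ : ℝ} (hρc : ρ < norm c) (z : ℂ)
    (hz : z ∈ Metric.closedBall c ρ) : norm c - ρ ≤ norm z := by
  have h1 : norm c - norm z ≤ norm (c - z) := by
    simpa using norm_sub_norm_le c z
  have hd : norm (c - z) ≤ ρ := by
    rw [← Complex.dist_eq] ; simpa [dist_comm] using hz
  linarith

lemma log_meanvalue {c : ℂ} {ρ : ℝ} (hρ : 0 < ρ) (hρc : ρ < norm c) :
    ∫ θ in (0:ℝ)..(2*π), Real.log (norm (c + ρ * Complex.exp (θ * Complex.I)))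
      = 2*π*Real.log (norm c) := by
  have hc0 : c ≠ 0 := by
    intro h; rw [h] at hρc; simp at hρc; linarith
  have hmem : ∀ z ∈ Metric.closedBall c ρ, z * (starRingEnd ℂ) c ∈ Complex.slitPlane := by
    intro z hz
    left
    have hd : norm (z - c) ≤ ρ := by rw [← Complex.dist_eq]; exact hz
    have h1 : (z * (starRingEnd ℂ) c).re
        = (c * (starRingEnd ℂ) c).re + ((z - c) * (starRingEnd ℂ) c).re := by
      rw [← Complex.add_re]; ring_nf
    have h2 : (c * (starRingEnd ℂ) c).re = (norm c)^2 := by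
      rw [Complex.mul_conj]; rw [Complex.ofReal_re]; exact (Complex.sq_norm c).symm
    have h3 : ((z - c) * (starRingEnd ℂ) c).re ≥ -(ρ * norm c) := by
      have := Complex.abs_re_le_norm ((z - c) * (starRingEnd ℂ) c)
      have habs : norm ((z - c) * (starRingEnd ℂ) c) ≤ ρ * norm c := by
        rw [norm_mul, Complex.norm_conj]
        exact mul_le_mul_of_nonneg_right hd (norm_nonneg c)
      have h4 := (Complex.abs_re_le_norm ((z - c) * (starRingEnd ℂ) c)).trans habs
      have := abs_le.mp h4
      linarith [this.1]
    have hac : 0 < norm c := norm_pos_iff.mpr hc0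
    nlinarith
  have hg : DifferentiableOn ℂ (fun z => Complex.log (z * (starRingEnd ℂ) c))
      (Metric.closedBall c ρ) := by
    intro z hz
    apply DifferentiableAt.differentiableWithinAt
    exact (Complex.differentiableAt_log (hmem z hz)).comp z
      ((differentiable_id.mul_const _) z)
  have hmv := re_meanvalue hρ hg
  have hre : ∀ z : ℂ, z ≠ 0 → (Complex.log (z * (starRingEnd ℂ) c)).re
      = Real.log (norm z) + Real.log (norm c) := by
    intro z hz
    rw [Complex.log_re, norm_mul, Complex.norm_conj,
      Real.log_mul (norm_ne_zero_iff.mpr hz) (norm_ne_zero_iff.mpr hc0)]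
  have hcircle_ne : ∀ θ : ℝ, c + ρ * Complex.exp (θ * Complex.I) ≠ 0 := by
    intro θ h
    have := circle_abs_pos hρc (c + ρ * Complex.exp (θ * Complex.I))
      (by rw [Metric.mem_closedBall, Complex.dist_eq]; simp [Complex.norm_exp]; simp [abs_of_pos hρ])
    rw [h] at this; simp at this; linarith
  have heq : (∫ θ in (0:ℝ)..(2*π), (Real.log (norm (c + ρ * Complex.exp (θ * Complex.I)))
        + Real.log (norm c)))
      = 2*π*(Real.log (norm c) + Real.log (norm c)) := by
    have e1 : (∫ θ in (0:ℝ)..(2*π), (Real.log (norm (c + ρ * Complex.exp (θ * Complex.I)))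
        + Real.log (norm c)))
        = ∫ θ in (0:ℝ)..(2*π), (Complex.log ((c + ρ * Complex.exp (θ * Complex.I)) * (starRingEnd ℂ) c)).re := by
      apply intervalIntegral.integral_congr
      intro θ _
      simp only []
      rw [hre _ (hcircle_ne θ)]
    rw [e1, hmv, hre c hc0]
  have hcont : Continuous (fun θ : ℝ => Real.log (norm (c + ρ * Complex.exp (θ * Complex.I)))) := by
    apply Real.continuousOn_log.comp_continuous
    · exact continuous_norm.comp (by continuity)
    · intro θ; simp only [Set.mem_compl_iff, Set.mem_singleton_iff]
      exact norm_ne_zero_iff.mpr (hcircle_ne θ)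
  rw [intervalIntegral.integral_add (hcont.intervalIntegrable _ _)
    (intervalIntegrable_const), intervalIntegral.integral_const] at heq
  simp only [smul_eq_mul] at heq
  linarith

lemma circlept_mem {c : ℂ} {ρ : ℝ} (hρ : 0 ≤ ρ) (θ : ℝ) :
    c + ρ * Complex.exp (θ * Complex.I) ∈ Metric.closedBall c ρ := by
  rw [Metric.mem_closedBall, dist_comm, Complex.dist_eq]
  simp [Complex.norm_exp, _root_.abs_of_nonneg hρ]

lemma mem_closedBall_abs {z₁ z : ℂ} {ρ : ℝ} (hz : z ∈ Metric.closedBall z₁ ρ) :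
    norm z₁ - ρ ≤ norm z ∧ norm z ≤ norm z₁ + ρ := by
  rw [Metric.mem_closedBall, Complex.dist_eq] at hz
  have h1 : norm z₁ - norm z ≤ norm (z - z₁) := by
    have := norm_sub_norm_le z₁ z
    rwa [norm_sub_rev z₁ z] at this
  have h2 : norm z - norm z₁ ≤ norm (z - z₁) := by
    have := norm_sub_norm_le z z₁
    simpa only using this
  constructor <;> linarith

lemma maxprin {U : Set ℂ} (hU : U = {z : ℂ | 0 < norm z ∧ norm z < 1})
    {w : ℂ → ℝ} (hwc : ContinuousOn w U) (hw : SubMeanValueOn w U)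
    {s r : ℝ} (hs : 0 < s) (hsr : s < r) (hr1 : r < 1)
    (hbd : ∀ z : ℂ, (norm z = s ∨ norm z = r) → w z ≤ 0) :
    ∀ z : ℂ, s ≤ norm z → norm z ≤ r → w z ≤ 0 := by
  set K : Set ℂ := norm ⁻¹' (Set.Icc s r) with hKdef
  have hKU : K ⊆ U := by
    intro z hz
    rw [hU]
    exact ⟨lt_of_lt_of_le hs hz.1, lt_of_le_of_lt hz.2 hr1⟩
  have hKc : IsCompact K := by
    apply Metric.isCompact_of_isClosed_isBounded
    · exact isClosed_Icc.preimage continuous_norm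
    · apply Bornology.IsBounded.subset (Metric.isBounded_closedBall (x := (0:ℂ)) (r := r))
      intro z hz
      rw [Metric.mem_closedBall, Complex.dist_eq, sub_zero]
      exact hz.2
  have hKne : K.Nonempty := ⟨(s : ℂ), by simp [hKdef, Complex.norm_of_nonneg hs.le, abs_of_pos hs, le_of_lt hsr]⟩
  have hwK : ContinuousOn w K := hwc.mono hKU
  obtain ⟨z₀, hz₀K, hmax⟩ := hKc.exists_isMaxOn hKne hwK
  set M := w z₀ with hM
  suffices hM0 : M ≤ 0 by
    intro z h1 h2
    exact le_trans (hmax ⟨h1, h2⟩) hM0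
  set S : Set ℂ := K ∩ w ⁻¹' (Set.Ici M) with hSdef
  have hSc : IsCompact S :=
    hKc.of_isClosed_subset (hwK.preimage_isClosed_of_isClosed hKc.isClosed isClosed_Ici)
      Set.inter_subset_left
  have hSne : S.Nonempty := ⟨z₀, hz₀K, le_refl M⟩
  obtain ⟨z₁, hz₁S, hmax₁⟩ := hSc.exists_isMaxOn hSne (continuous_norm.continuousOn)
  have hz₁K : z₁ ∈ K := hz₁S.1
  have hwz₁ : w z₁ = M := le_antisymm (hmax hz₁K) hz₁S.2
  rcases eq_or_lt_of_le (hz₁K.1 : s ≤ norm z₁) with heq | hlt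
  · rw [← hwz₁]; exact hbd z₁ (Or.inl heq.symm)
  rcases eq_or_lt_of_le (hz₁K.2 : norm z₁ ≤ r) with heq | hlt2
  · rw [← hwz₁]; exact hbd z₁ (Or.inr heq)
  exfalso
  set ρ : ℝ := min (norm z₁ - s) (r - norm z₁) with hρdef
  have hρpos : 0 < ρ := lt_min (by linarith) (by linarith)
  have hρ1 : ρ ≤ norm z₁ - s := min_le_left _ _
  have hρ2 : ρ ≤ r - norm z₁ := min_le_right _ _
  have hballK : Metric.closedBall z₁ ρ ⊆ K := by
    intro z hz
    obtain ⟨h1, h2⟩ := mem_closedBall_abs hz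
    exact ⟨by linarith, by linarith⟩
  have hballU : Metric.closedBall z₁ ρ ⊆ U := hballK.trans hKU
  have hsub := hw z₁ ρ hρpos hballU
  -- the far point p on the circle
  set a := Complex.arg z₁ with hadef
  have ha := Complex.arg_mem_Ioc z₁
  set θ₀ : ℝ := if 0 ≤ a then a else a + 2*π with hθ₀def
  have hπ := Real.pi_pos
  have hθ₀0 : 0 ≤ θ₀ := by
    rw [hθ₀def]; split
    · assumption
    · have := ha.1; linarith
  have hθ₀2π : θ₀ < 2*π := by
    rw [hθ₀def]; split
    · have := ha.2; linarith
    · push_neg at *; linarith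
  have hexpθ₀ : Complex.exp (θ₀ * Complex.I) = Complex.exp (a * Complex.I) := by
    rw [hθ₀def]; split
    · rfl
    · push_cast
      rw [add_mul, Complex.exp_add]
      simp [Complex.exp_two_pi_mul_I]
  set p : ℂ := z₁ + ρ * Complex.exp (θ₀ * Complex.I) with hpdef
  have hz₁ne : z₁ ≠ 0 := by
    intro h; rw [h] at hlt; simp at hlt; linarith
  have habsp : norm p = norm z₁ + ρ := by
    have hz₁eq : (norm z₁ : ℂ) * Complex.exp (a * Complex.I) = z₁ :=
      Complex.norm_mul_exp_arg_mul_I z₁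
    have : p = ((norm z₁ + ρ : ℝ) : ℂ) * Complex.exp (a * Complex.I) := by
      rw [hpdef, hexpθ₀]
      nth_rewrite 1 [← hz₁eq]
      push_cast; ring
    rw [this, norm_mul, Complex.norm_exp]
    simp only [Complex.mul_re, Complex.ofReal_re, Complex.I_re, Complex.ofReal_im, Complex.I_im]
    rw [Complex.norm_real]
    have : 0 ≤ norm z₁ + ρ := by positivity
    simp [_root_.abs_of_nonneg this]
  -- w p ≥ M leads to contradiction with maximality of |z₁|
  have hwp : ¬ (M ≤ w p) := by
    intro hMp
    have hpK : p ∈ K := hballK (circlept_mem hρpos.le θ₀)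
    have : norm p ≤ norm z₁ := hmax₁ ⟨hpK, hMp⟩
    rw [habsp] at this; linarith
  push_neg at hwp
  -- integral positivity contradiction
  set g : ℝ → ℝ := fun θ => M - w (z₁ + ρ * Complex.exp (θ * Complex.I)) with hgdef
  have hcircle_mem : ∀ θ : ℝ, z₁ + ρ * Complex.exp (θ * Complex.I) ∈ K :=
    fun θ => hballK (circlept_mem hρpos.le θ)
  have hgcont : Continuous g := by
    apply continuous_const.sub
    exact hwK.comp_continuous (continuous_circleMap z₁ ρ) hcircle_mem
  have hgnonneg : ∀ θ : ℝ, 0 ≤ g θ := by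
    intro θ
    have h2 : w (z₁ + ρ * Complex.exp (θ * Complex.I)) ≤ w z₀ := hmax (hcircle_mem θ)
    simp only [hgdef]; linarith
  have hgθ₀ : 0 < g θ₀ := by
    have : w (z₁ + ρ * Complex.exp (θ₀ * Complex.I)) < M := hwp
    simp only [hgdef]; linarith
  have hgint : IntervalIntegrable g MeasureTheory.volume 0 (2*π) :=
    hgcont.intervalIntegrable _ _
  have hwint : IntervalIntegrable (fun θ => w (z₁ + ρ * Complex.exp (θ * Complex.I)))
      MeasureTheory.volume 0 (2*π) :=
    (hwK.comp_continuous (continuous_circleMap z₁ ρ) hcircle_mem).intervalIntegrable _ _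
  have hintle : (∫ θ in (0:ℝ)..(2*π), g θ) ≤ 0 := by
    have h2π : (0:ℝ) < 2*π := by linarith
    have := hsub
    rw [hwz₁] at this
    have hge : 2*π*M ≤ ∫ θ in (0:ℝ)..(2*π), w (z₁ + ρ * Complex.exp (θ * Complex.I)) := by
      rw [div_mul_eq_mul_div, one_mul] at this
      have h3 := (le_div_iff₀ h2π).mp this
      linarith
    rw [hgdef]
    rw [intervalIntegral.integral_sub intervalIntegrable_const hwint,
      intervalIntegral.integral_const]
    simp only [smul_eq_mul, sub_nonpos]
    linarith
  have hintpos : 0 < ∫ θ in (0:ℝ)..(2*π), g θ := by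
    rw [intervalIntegral.integral_pos_iff_support_of_nonneg_ae
      (Filter.Eventually.of_forall hgnonneg) hgint]
    refine ⟨by linarith, ?_⟩
    obtain ⟨δ, hδpos, hδ⟩ := Metric.isOpen_iff.mp (isOpen_Ioi.preimage hgcont) θ₀ hgθ₀
    set δ' : ℝ := min δ (2*π - θ₀) with hδ'def
    have hδ'pos : 0 < δ' := lt_min hδpos (by linarith)
    have hJ : Set.Ioo θ₀ (θ₀ + δ') ⊆ Function.support g ∩ Set.Ioc 0 (2*π) := by
      intro x hx
      constructor
      · have hxin : x ∈ Metric.ball θ₀ δ := by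
          rw [Metric.mem_ball, Real.dist_eq, abs_lt]
          have hd : δ' ≤ δ := min_le_left _ _
          exact ⟨by linarith [hx.1], by linarith [hx.2]⟩
        exact Function.mem_support.mpr (ne_of_gt (hδ hxin))
      · constructor
        · linarith [hx.1, hθ₀0]
        · have := hx.2; have : x < θ₀ + δ' := hx.2
          have hd : δ' ≤ 2*π - θ₀ := min_le_right _ _
          linarith
    calc (0:ENNReal) < MeasureTheory.volume (Set.Ioo θ₀ (θ₀ + δ')) := by
          rw [Real.volume_Ioo]; simp; linarith
      _ ≤ _ := MeasureTheory.measure_mono hJ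
  linarith

/-- If a closed ball is inside the punctured disc, its radius is less than `|c|`. -/
lemma radius_lt_abs {U : Set ℂ} (hU : U = {z : ℂ | 0 < norm z ∧ norm z < 1})
    {c : ℂ} {ρ : ℝ} (hρ : 0 < ρ) (hsub : Metric.closedBall c ρ ⊆ U) :
    ρ < norm c := by
  by_contra h
  push_neg at h
  have h0 : (0:ℂ) ∈ Metric.closedBall c ρ := by
    rw [Metric.mem_closedBall, dist_comm, Complex.dist_eq, sub_zero]
    exact h
  have := hsub h0
  rw [hU] at this
  simp at this

/-- Sub-mean value property of `u - Re g + b log |z|`. -/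
lemma submean_comb {U : Set ℂ} (hU : U = {z : ℂ | 0 < norm z ∧ norm z < 1})
    {u : ℂ → ℝ} (hc : ContinuousOn u U) (hsm : SubMeanValueOn u U)
    (g : ℂ → ℂ) (hg : Differentiable ℂ g) (b : ℝ) :
    SubMeanValueOn (fun z => u z - (g z).re + b * Real.log (norm z)) U ∧
    ContinuousOn (fun z => u z - (g z).re + b * Real.log (norm z)) U := by
  have hUopen : IsOpen U := by
    rw [hU]
    have : {z : ℂ | 0 < norm z ∧ norm z < 1}
        = norm ⁻¹' (Set.Ioo 0 1) := rfl
    rw [this]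
    exact isOpen_Ioo.preimage continuous_norm
  have habs_ne : ∀ z ∈ U, norm z ≠ 0 := by
    intro z hz; rw [hU] at hz; exact ne_of_gt hz.1
  constructor
  · intro c ρ hρ hsub
    have hρc : ρ < norm c := radius_lt_abs hU hρ hsub
    have hcmem : c ∈ U := hsub (Metric.mem_closedBall_self hρ.le)
    have hcirc : ∀ θ : ℝ, c + ρ * Complex.exp (θ * Complex.I) ∈ U :=
      fun θ => hsub (circlept_mem hρ.le θ)
    have h2π : (0:ℝ) < 2*π := by linarith [Real.pi_pos]
    -- integrability of the three pieces
    have hcont_u : Continuous (fun θ : ℝ => u (c + ρ * Complex.exp (θ * Complex.I))) :=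
      hc.comp_continuous (continuous_circleMap c ρ) hcirc
    have hcont_g : Continuous (fun θ : ℝ => (g (c + ρ * Complex.exp (θ * Complex.I))).re) :=
      (Complex.continuous_re.comp hg.continuous).comp (continuous_circleMap c ρ)
    have hcont_log : Continuous (fun θ : ℝ =>
        Real.log (norm (c + ρ * Complex.exp (θ * Complex.I)))) := by
      apply Real.continuousOn_log.comp_continuous
        (continuous_norm.comp (continuous_circleMap c ρ))
      intro θ
      exact habs_ne _ (hcirc θ)
    have h1 := hsm c ρ hρ hsub
    have h2 := re_meanvalue hρ (hg.differentiableOn (s := Metric.closedBall c ρ))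
    have h3 := log_meanvalue hρ hρc
    have hsplit : (∫ θ in (0:ℝ)..(2*π), (u (c + ρ * Complex.exp (θ * Complex.I))
          - (g (c + ρ * Complex.exp (θ * Complex.I))).re
          + b * Real.log (norm (c + ρ * Complex.exp (θ * Complex.I)))))
        = (∫ θ in (0:ℝ)..(2*π), u (c + ρ * Complex.exp (θ * Complex.I)))
          - (∫ θ in (0:ℝ)..(2*π), (g (c + ρ * Complex.exp (θ * Complex.I))).re)
          + b * ∫ θ in (0:ℝ)..(2*π), Real.log (norm (c + ρ * Complex.exp (θ * Complex.I))) := by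
      rw [intervalIntegral.integral_add (f := fun θ => u (c + ρ * Complex.exp (θ * Complex.I)) - (g (c + ρ * Complex.exp (θ * Complex.I))).re)
        (g := fun θ => b * Real.log (norm (c + ρ * Complex.exp (θ * Complex.I)))) ((hcont_u.sub hcont_g).intervalIntegrable _ _)
        ((continuous_const.mul hcont_log).intervalIntegrable _ _),
        intervalIntegral.integral_sub (hcont_u.intervalIntegrable _ _)
          (hcont_g.intervalIntegrable _ _),
        intervalIntegral.integral_const_mul]
    simp only []
    rw [hsplit, h2, h3]
    have hb : 1/(2*π) * (2*π) = 1 := by field_simp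
    have expand : 1 / (2 * π) * ((∫ θ in (0:ℝ)..(2*π), u (c + ρ * Complex.exp (θ * Complex.I)))
        - 2*π*(g c).re + b * (2*π*Real.log (norm c)))
        = 1 / (2 * π) * (∫ θ in (0:ℝ)..(2*π), u (c + ρ * Complex.exp (θ * Complex.I)))
          - (g c).re + b * Real.log (norm c) := by
      generalize (∫ θ in (0:ℝ)..(2*π), u (c + ρ * Complex.exp (θ * Complex.I))) = X
      field_simp
    rw [expand]
    linarith
  · apply ContinuousOn.add
    · exact hc.sub ((Complex.continuous_re.comp hg.continuous).continuousOn)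
    · apply ContinuousOn.mul continuousOn_const
      apply Real.continuousOn_log.comp (continuous_norm.continuousOn)
      intro z hz
      exact habs_ne z hz

/-- Approximate the boundary values of a continuous function on the circle of radius `r`
by the real part of a polynomial-type entire function. -/
lemma fourier_approx {u : ℂ → ℝ} {U : Set ℂ}
    (hU : U = {z : ℂ | 0 < norm z ∧ norm z < 1})
    (hc : ContinuousOn u U) {r : ℝ} (hr : 0 < r) (hr1 : r < 1) {ε : ℝ} (hε : 0 < ε) :
    ∃ g : ℂ → ℂ, Differentiable ℂ g ∧
      ∀ θ : ℝ, |u (r * Complex.exp (θ * Complex.I)) - (g (r * Complex.exp (θ * Complex.I))).re| ≤ ε := by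
  haveI : Fact (0 < 2 * π) := ⟨by positivity⟩
  set G : ℝ → ℂ := fun θ => (u (r * Complex.exp (θ * Complex.I)) : ℂ) with hGdef
  have hmem : ∀ θ : ℝ, (r : ℂ) * Complex.exp (θ * Complex.I) ∈ U := by
    intro θ
    rw [hU]
    constructor <;> simp [Complex.norm_exp, _root_.abs_of_pos hr] <;> [exact hr; exact hr1]
  have hGcont : Continuous G := by
    apply Complex.continuous_ofReal.comp
    apply hc.comp_continuous _ hmem
    exact (continuous_circleMap 0 r).comp continuous_id |>.congr (by intro θ; simp [circleMap])
  have hGper : Function.Periodic G (2 * π) := by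
    intro θ
    simp only [hGdef]
    congr 2
    push_cast
    rw [add_mul, Complex.exp_add]
    simp [Complex.exp_two_pi_mul_I]
  set Gc : C(AddCircle (2*π), ℂ) := ⟨hGper.lift, continuous_coinduced_dom.mpr hGcont⟩ with hGcdef
  -- density of trigonometric polynomials
  have hdense := span_fourier_closure_eq_top (T := 2*π)
  have hGc_mem : Gc ∈ closure ((Submodule.span ℂ (Set.range (fourier (T := 2*π)))) : Set C(AddCircle (2*π), ℂ)) := by
    have : Gc ∈ (Submodule.span ℂ (Set.range (fourier (T := 2*π)))).topologicalClosure := by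
      rw [hdense]; trivial
    exact this
  obtain ⟨P, hPmem, hPdist⟩ := Metric.mem_closure_iff.mp hGc_mem ε hε
  obtain ⟨c, hcP⟩ := (Finsupp.mem_span_range_iff_exists_finsupp).mp hPmem
  -- build the entire comparison function
  set g : ℂ → ℂ := fun z => c.sum fun n a =>
    (if 0 ≤ n then a else (starRingEnd ℂ) a) * (z / r)^(n.natAbs) with hgdef
  refine ⟨g, ?_, ?_⟩
  · rw [hgdef]
    simp only [Finsupp.sum]
    apply Differentiable.fun_sum
    intro n _
    exact (differentiable_const _).mul ((differentiable_id.div_const _).pow _)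
  · intro θ
    -- identify real parts
    have hgre : (g ((r:ℂ) * Complex.exp (θ * Complex.I))).re = (P ((θ : ℝ) : AddCircle (2*π))).re := by
      rw [← hcP, hgdef]
      simp only [Finsupp.sum]
      rw [ContinuousMap.coe_sum, Finset.sum_apply, Complex.re_sum, Complex.re_sum]
      apply Finset.sum_congr rfl
      intro n _
      have hrne : (r : ℂ) ≠ 0 := by exact_mod_cast hr.ne'
      have hdiv : (r : ℂ) * Complex.exp (θ * Complex.I) / r = Complex.exp (θ * Complex.I) := by
        field_simp
      have hfour : (fourier n) ((θ : ℝ) : AddCircle (2*π)) = Complex.exp (n * θ * Complex.I) := by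
        rw [fourier_coe_apply]
        congr 1
        have h2π : (2 * (π:ℂ)) ≠ 0 :=
          mul_ne_zero two_ne_zero (Complex.ofReal_ne_zero.mpr Real.pi_ne_zero)
        push_cast
        rw [div_eq_iff h2π]
        ring
      rw [ContinuousMap.smul_apply, hfour, hdiv, smul_eq_mul]
      have hpow : Complex.exp (θ * Complex.I) ^ (n.natAbs) = Complex.exp ((n.natAbs : ℂ) * θ * Complex.I) := by
        rw [← Complex.exp_nat_mul]; congr 1; ring
      rw [hpow]
      rcases le_or_gt 0 n with hn | hn
      · rw [if_pos hn]
        have h1 : (n.natAbs : ℤ) = n := Int.natAbs_of_nonneg hn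
        have hnn : ((n.natAbs : ℂ)) = (n : ℂ) := by
          calc ((n.natAbs : ℂ)) = (((n.natAbs : ℤ) : ℂ)) := (Int.cast_natCast n.natAbs).symm
            _ = (n : ℂ) := by rw [h1]
        rw [hnn]
      · rw [if_neg (not_le.mpr hn)]
        have hnabs : ((n.natAbs : ℂ)) = -(n : ℂ) := by
          have h1 : (n.natAbs : ℤ) = -n := by omega
          calc ((n.natAbs : ℂ)) = (((n.natAbs : ℤ) : ℂ)) := (Int.cast_natCast n.natAbs).symm
            _ = ((-n : ℤ) : ℂ) := by rw [h1]
            _ = -(n : ℂ) := by push_cast; ring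
        rw [hnabs]
        have hconj : (starRingEnd ℂ) (c n) * Complex.exp (-(n:ℂ) * θ * Complex.I)
            = (starRingEnd ℂ) ((c n) * Complex.exp ((n:ℂ) * θ * Complex.I)) := by
          rw [map_mul]
          congr 1
          rw [← Complex.exp_conj]
          congr 1
          simp [map_mul, Complex.conj_I, Complex.conj_ofReal]
          try ring
        rw [hconj, Complex.conj_re]
    have hGeq : Gc ((θ : ℝ) : AddCircle (2*π)) = G θ := hGper.lift_coe θ
    have hdist := (ContinuousMap.dist_apply_le_dist (f := Gc) (g := P) ((θ : ℝ) : AddCircle (2*π))).trans hPdist.le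
    rw [hGeq] at hdist
    rw [Complex.dist_eq] at hdist
    have hre : |(G θ - P ((θ : ℝ) : AddCircle (2*π))).re| ≤ norm (G θ - P ((θ : ℝ) : AddCircle (2*π))) :=
      Complex.abs_re_le_norm _
    rw [Complex.sub_re] at hre
    have : (G θ).re = u ((r:ℂ) * Complex.exp (θ * Complex.I)) := by simp [hGdef]
    rw [this] at hre
    rw [hgre]
    linarith [abs_le.mp (hre.trans hdist)] -- rough

/-- Grauert–Remmert type extension in one variable: if `u` is continuous, bounded above
and satisfies the sub-mean value inequality on the punctured unit disc, and `u ≥ L`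
frequently near the puncture, then `L` is at most the circle average of `u` on any circle
of radius `r ∈ (0,1)` around the origin. -/
theorem le_circle_average_of_frequently_ge
    (u : ℂ → ℝ)
    (hc : ContinuousOn u {z : ℂ | 0 < ‖z‖ ∧ ‖z‖ < 1})
    (hb : BddAbove (u '' {z : ℂ | 0 < ‖z‖ ∧ ‖z‖ < 1}))
    (hsm : SubMeanValueOn u {z : ℂ | 0 < ‖z‖ ∧ ‖z‖ < 1})
    (L : ℝ) (hL : ∃ᶠ z in nhdsWithin (0 : ℂ) {(0 : ℂ)}ᶜ, L ≤ u z)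
    (r : ℝ) (hr : 0 < r) (hr1 : r < 1) :
    L ≤ (1 / (2 * Real.pi)) *
      ∫ θ in (0:ℝ)..(2 * Real.pi), u (r * Complex.exp (θ * Complex.I)) := by
  have hπ := Real.pi_pos
  set U : Set ℂ := {z : ℂ | 0 < norm z ∧ norm z < 1} with hUdef
  have hU : U = {z : ℂ | 0 < norm z ∧ norm z < 1} := rfl
  apply le_of_forall_pos_le_add
  intro ε hε
  set ε' : ℝ := ε/2 with hε'def
  have hε' : 0 < ε' := by positivity
  obtain ⟨g, hg, happrox⟩ := fourier_approx hU hc hr hr1 hε'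
  obtain ⟨C, hC⟩ := hb
  have hCu : ∀ z ∈ U, u z ≤ C := fun z hz => hC ⟨z, hz, rfl⟩
  obtain ⟨Cg, hCg⟩ := (isCompact_closedBall (0:ℂ) r).exists_bound_of_continuousOn
    hg.continuous.continuousOn
  have hCg0 : 0 ≤ Cg := le_trans (norm_nonneg (g 0))
    (hCg 0 (Metric.mem_closedBall_self hr.le))
  -- boundary bound on the circle |z| = r, holomorphic-side version
  have happrox' : ∀ z : ℂ, norm z = r → u z - (g z).re ≤ ε' := by
    intro z hz
    have hzeq : (norm z : ℂ) * Complex.exp (Complex.arg z * Complex.I) = z :=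
      Complex.norm_mul_exp_arg_mul_I z
    rw [hz] at hzeq
    have := happrox (Complex.arg z)
    rw [hzeq] at this
    have := abs_le.mp this
    linarith [this.1, this.2]
  -- continuity of u on the circle of radius r (and integrals)
  have hcircle_cont : Continuous (fun θ : ℝ => (r:ℂ) * Complex.exp (θ * Complex.I)) := by
    have h := continuous_circleMap (0:ℂ) r
    have heq : (fun θ : ℝ => (r:ℂ) * Complex.exp (θ * Complex.I)) = circleMap 0 r := by
      funext θ; simp [circleMap]
    rw [heq]; exact h
  have hmem_r : ∀ θ : ℝ, (r:ℂ) * Complex.exp (θ * Complex.I) ∈ U := by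
    intro θ
    constructor <;> simp [Complex.norm_exp, _root_.abs_of_pos hr] <;> [exact hr; exact hr1]
  have hu_cont : Continuous (fun θ : ℝ => u ((r:ℂ) * Complex.exp (θ * Complex.I))) :=
    hc.comp_continuous hcircle_cont hmem_r
  have hg_cont : Continuous (fun θ : ℝ => (g ((r:ℂ) * Complex.exp (θ * Complex.I))).re) :=
    (Complex.continuous_re.comp hg.continuous).comp hcircle_cont
  -- mean value of Re g over circle r
  have hmv := re_meanvalue (c := 0) (ρ := r) hr (hg.differentiableOn)
  simp only [zero_add] at hmv
  have hre_g0 : (g 0).re ≤ (1 / (2 * Real.pi)) *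
      (∫ θ in (0:ℝ)..(2 * Real.pi), u ((r:ℂ) * Complex.exp (θ * Complex.I))) + ε' := by
    have hint_le : (∫ θ in (0:ℝ)..(2*π), (g ((r:ℂ) * Complex.exp (θ * Complex.I))).re)
        ≤ ∫ θ in (0:ℝ)..(2*π), (u ((r:ℂ) * Complex.exp (θ * Complex.I)) + ε') := by
      apply intervalIntegral.integral_mono_on (by linarith)
        (hg_cont.intervalIntegrable _ _) ((hu_cont.add continuous_const).intervalIntegrable _ _)
      intro θ _
      have := abs_le.mp (happrox θ)
      show (g ((r:ℂ) * Complex.exp (θ * Complex.I))).re ≤ u ((r:ℂ) * Complex.exp (θ * Complex.I)) + ε'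
      linarith [this.1]
    rw [intervalIntegral.integral_add (hu_cont.intervalIntegrable _ _)
      intervalIntegrable_const, intervalIntegral.integral_const] at hint_le
    have h2π : (0:ℝ) < 2*π := by linarith
    have hmul := mul_le_mul_of_nonneg_left hint_le (le_of_lt (by positivity : (0:ℝ) < 1/(2*π)))
    calc (g 0).re = 1/(2*π) * (2*π*(g 0).re) := by field_simp
      _ = 1/(2*π) * (∫ θ in (0:ℝ)..(2*π), (g ((r:ℂ) * Complex.exp (θ * Complex.I))).re) := by
          rw [hmv]
      _ ≤ 1/(2*π) * ((∫ θ in (0:ℝ)..(2*π), u ((r:ℂ) * Complex.exp (θ * Complex.I))) + (2*π - 0) • ε') := hmul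
      _ = 1/(2*π) * (∫ θ in (0:ℝ)..(2*π), u ((r:ℂ) * Complex.exp (θ * Complex.I))) + ε' := by
          rw [smul_eq_mul]
          generalize (∫ θ in (0:ℝ)..(2*π), u ((r:ℂ) * Complex.exp (θ * Complex.I))) = X
          field_simp; ring
  -- main estimate: L ≤ re g 0 + ε'
  have hmain : L ≤ (g 0).re + ε' := by
    apply le_of_forall_pos_le_add
    intro η hη
    -- continuity of Re g at 0
    obtain ⟨δ₀, hδ₀pos, hδ₀⟩ := Metric.continuous_iff.mp
      (Complex.continuous_re.comp hg.continuous) 0 η hη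
    -- pick a point z₀ close to 0 with L ≤ u z₀
    have hev : ∀ᶠ z in nhdsWithin (0 : ℂ) {(0 : ℂ)}ᶜ,
        norm z < min r δ₀ ∧ z ≠ 0 := by
      apply Filter.Eventually.and
      · apply Filter.Eventually.filter_mono nhdsWithin_le_nhds
        have : Metric.ball (0:ℂ) (min r δ₀) ∈ nhds (0:ℂ) :=
          Metric.ball_mem_nhds _ (lt_min hr hδ₀pos)
        filter_upwards [this] with z hz
        rwa [Metric.mem_ball, Complex.dist_eq, sub_zero] at hz
      · exact eventually_mem_nhdsWithin
    obtain ⟨z₀, hz₀u, hz₀abs, hz₀ne⟩ := (hL.and_eventually hev).exists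
    have hz₀pos : 0 < norm z₀ := by
      exact norm_pos_iff.mpr hz₀ne
    have hz₀r : norm z₀ < r := lt_of_lt_of_le hz₀abs (min_le_left _ _)
    have hgz₀ : |(g z₀).re - (g 0).re| ≤ η := by
      have hd : dist z₀ 0 < δ₀ := by
        rw [Complex.dist_eq, sub_zero]
        exact lt_of_lt_of_le hz₀abs (min_le_right _ _)
      have h5 := hδ₀ z₀ hd
      rw [Real.dist_eq] at h5
      exact h5.le
    -- for every b > 0 : L ≤ re g z₀ + ε' + b * (log r - log |z₀|)
    have hball : ∀ b : ℝ, 0 < b → L ≤ (g z₀).re + ε' + b * (Real.log r - Real.log (norm z₀)) := by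
      intro b hbpos
      set g' : ℂ → ℂ := fun z => g z + ((ε' + b * Real.log r : ℝ) : ℂ) with hg'def
      have hg' : Differentiable ℂ g' := hg.add_const _
      obtain ⟨hw_sm, hw_cont⟩ := submean_comb hU hc hsm g' hg' b
      set δ : ℝ := min (norm z₀ / 2) (r * Real.exp (-(C + Cg + 1)/b)) with hδdef
      have hδpos : 0 < δ := lt_min (by linarith) (by positivity)
      have hδz₀ : δ ≤ norm z₀ / 2 := min_le_left _ _
      have hδlt : δ < r := lt_of_le_of_lt hδz₀ (by linarith)
      have hlogδ : Real.log δ ≤ Real.log r - (C + Cg + 1)/b := by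
        have h1 : δ ≤ r * Real.exp (-(C + Cg + 1)/b) := min_le_right _ _
        have h2 := Real.log_le_log hδpos h1
        rw [Real.log_mul hr.ne' (Real.exp_ne_zero _), Real.log_exp, neg_div] at h2
        linarith
      have hbd : ∀ z : ℂ, (norm z = δ ∨ norm z = r) →
          u z - (g' z).re + b * Real.log (norm z) ≤ 0 := by
        intro z hz
        have hg're : (g' z).re = (g z).re + ε' + b * Real.log r := by
          rw [hg'def]; simp [Complex.add_re, Complex.ofReal_re]; ring
        rcases hz with hz | hz
        · have hzU : z ∈ U := by
            constructor
            · rw [hz]; exact hδpos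
            · rw [hz]; linarith
          have h1 : u z ≤ C := hCu z hzU
          have h2 : -(g z).re ≤ Cg := by
            have hnorm := hCg z (by rw [Metric.mem_closedBall, Complex.dist_eq, sub_zero, hz]; linarith)
            have h6 : |(g z).re| ≤ Cg :=
              le_trans (Complex.abs_re_le_norm (g z)) hnorm
            linarith [(abs_le.mp h6).1]
          rw [hg're, hz]
          have h3 : b * Real.log δ ≤ b * Real.log r - (C + Cg + 1) := by
            have h4 := mul_le_mul_of_nonneg_left hlogδ hbpos.le
            have h5 : b * ((C + Cg + 1)/b) = C + Cg + 1 := by field_simp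
            rw [mul_sub, h5] at h4
            exact h4
          linarith
        · rw [hg're, hz]
          have := happrox' z hz
          linarith
      have hmaxp := maxprin hU hw_cont hw_sm hδpos hδlt hr1 hbd z₀
        (by linarith) hz₀r.le
      have hg're : (g' z₀).re = (g z₀).re + ε' + b * Real.log r := by
        rw [hg'def]; simp [Complex.add_re, Complex.ofReal_re]; ring
      rw [hg're] at hmaxp
      have := hz₀u
      linarith
    -- let b → 0
    have hK : 0 < Real.log r - Real.log (norm z₀) + 1 := by
      have := Real.log_lt_log hz₀pos hz₀r
      linarith
    have hL2 : L ≤ (g z₀).re + ε' := by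
      apply le_of_forall_pos_le_add
      intro τ hτ
      set b := τ / (Real.log r - Real.log (norm z₀) + 1) with hbdef
      have hbpos : 0 < b := by positivity
      have := hball b hbpos
      have hbK : b * (Real.log r - Real.log (norm z₀)) ≤ τ := by
        rw [hbdef]
        rw [div_mul_eq_mul_div, div_le_iff₀ hK]
        have hKnn : 0 ≤ Real.log r - Real.log (norm z₀) := by
          have := Real.log_lt_log hz₀pos hz₀r; linarith
        nlinarith
      linarith
    have := abs_le.mp hgz₀
    linarith [this.1]
  linarith
end
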